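/- arXiv:1501.00387 — 7 statements merged into one kernel-verified Lean document; each statement's English description precedes it below -/
import Mathlib

section
/- Let E be an election, p a designated candidate, and t any shift action for p. Then for every candidate c ≠ p and every voter v^i, the rank of c in v^i's order in shf(E,t) is at most rank(c,v^i)+1; consequently, for every k < m, the (k+1)-Approval score of c in shf(E,t) is at least the k-Approval score of c in E. In particular, if k is the Bucklin winning round of E, then the Bucklin winning round of shf(E,t) exists and is at most k+1. -/
/-- The rank function of the election obtained by shifting the designated candidate `p`
upwards by `t i` positions in the vote of voter `i` (placing `p` on top if `t i` exceeds
`rank i p - 1`); all other candidates keep their relative order. -/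
def shiftRank {C : Type*} [DecidableEq C] {n : ℕ} (rank : Fin n → C → ℕ) (p : C)
    (t : Fin n → ℕ) : Fin n → C → ℕ := fun i c =>
  if c = p then max 1 (rank i p - t i)
  else if max 1 (rank i p - t i) ≤ rank i c ∧ rank i c < rank i p then rank i c + 1
  else rank i c

/-- The `k`-Approval score of candidate `c`. -/
def approvalScoreAt {C : Type*} {n : ℕ} (rank : Fin n → C → ℕ) (k : ℕ) (c : C) : ℕ :=
  (Finset.univ.filter (fun i : Fin n => rank i c ≤ k)).card

/-- after a shift action, every candidate `c ≠ p` drops by at most one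
position in every vote; consequently `c`'s `(k+1)`-Approval score after the shift is at
least `c`'s `k`-Approval score before; in particular, if `k` is the Bucklin winning round
of the original election then the Bucklin winning round of the shifted election exists
and is at most `k + 1`. -/
theorem statement1 {C : Type*} [Fintype C] [DecidableEq C] {n m : ℕ}
    (rank : Fin n → C → ℕ)
    (hcard : Fintype.card C = m)
    (hinj : ∀ i, Function.Injective (rank i))
    (hrange : ∀ i c, 1 ≤ rank i c ∧ rank i c ≤ m)
    (p : C) (t : Fin n → ℕ) :
    (∀ c : C, c ≠ p → ∀ i : Fin n, shiftRank rank p t i c ≤ rank i c + 1) ∧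
    (∀ c : C, c ≠ p → ∀ k : ℕ, k < m →
      approvalScoreAt rank k c ≤ approvalScoreAt (shiftRank rank p t) (k + 1) c) ∧
    (∀ k : ℕ, IsLeast {j : ℕ | ∃ c : C, n / 2 + 1 ≤ approvalScoreAt rank j c} k →
      ∃ ℓ : ℕ,
        IsLeast {j : ℕ | ∃ c : C, n / 2 + 1 ≤ approvalScoreAt (shiftRank rank p t) j c} ℓ ∧
        ℓ ≤ k + 1) := by
  -- key bound: for every candidate, the shifted rank is at most rank + 1
  have key : ∀ c : C, ∀ i : Fin n, shiftRank rank p t i c ≤ rank i c + 1 := by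
    intro c i
    unfold shiftRank
    by_cases h : c = p
    · rw [if_pos h, h]
      have := (hrange i p).1
      omega
    · simp only [if_neg h]
      split <;> omega
  have score : ∀ c : C, ∀ k : ℕ,
      approvalScoreAt rank k c ≤ approvalScoreAt (shiftRank rank p t) (k + 1) c := by
    intro c k
    apply Finset.card_le_card
    intro i hi
    simp only [Finset.mem_filter, Finset.mem_univ, true_and] at hi ⊢
    have := key c i
    omega
  refine ⟨fun c _ i => key c i, fun c _ k _ => score c k, ?_⟩
  intro k hk
  obtain ⟨⟨c, hc⟩, -⟩ := hk
  have hne : (k + 1) ∈ {j : ℕ | ∃ c : C, n / 2 + 1 ≤ approvalScoreAt (shiftRank rank p t) j c} :=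
    ⟨c, le_trans hc (score c k)⟩
  refine ⟨sInf _, ⟨Nat.sInf_mem ⟨_, hne⟩, fun j hj => Nat.sInf_le hj⟩, Nat.sInf_le hne⟩
end

section
/- Let E be an election with Bucklin winning round k, let p be a designated candidate with nondecreasing cost functions π^i satisfying π^i(0)=0, and let t be a shift action that is minimal for making p a simplified Bucklin winner. Then the Bucklin winning round ℓ of shf(E,t) satisfies k ≤ ℓ ≤ k+1. -/
/-- Candidate `c` has a majority at round `k`. -/
def majAt {C : Type*} {n : ℕ} (rank : Fin n → C → ℕ) (k : ℕ) (c : C) : Prop :=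
  n / 2 + 1 ≤ approvalScoreAt rank k c

/-- `k` is the Bucklin winning round: the least round at which some candidate has a
majority. -/
def IsBucklinRound {C : Type*} {n : ℕ} (rank : Fin n → C → ℕ) (k : ℕ) : Prop :=
  IsLeast {j : ℕ | ∃ c : C, majAt rank j c} k

/-- `c` is a simplified Bucklin winner: `c` has a majority at the Bucklin winning round. -/
def IsSimpBucklinWinner {C : Type*} {n : ℕ} (rank : Fin n → C → ℕ) (c : C) : Prop :=
  ∃ k, IsBucklinRound rank k ∧ majAt rank k c

/-- The cost `Π(t)` of a shift action `t`. -/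
def briberyCost {n : ℕ} (π : Fin n → ℕ → ℕ∞) (t : Fin n → ℕ) : ℕ∞ :=
  ∑ i, π i (t i)


private lemma score_le {C : Type*} {n : ℕ} (r1 r2 : Fin n → C → ℕ) (k1 k2 : ℕ) (c1 c2 : C)
    (h : ∀ i, r1 i c1 ≤ k1 → r2 i c2 ≤ k2) :
    approvalScoreAt r1 k1 c1 ≤ approvalScoreAt r2 k2 c2 := by
  unfold approvalScoreAt
  apply Finset.card_le_card
  intro i hi
  simp only [Finset.mem_filter, Finset.mem_univ, true_and] at hi ⊢
  exact h i hi

private lemma maj_le {C : Type*} {n : ℕ} {r1 r2 : Fin n → C → ℕ} {k1 k2 : ℕ} {c1 c2 : C}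
    (h : ∀ i, r1 i c1 ≤ k1 → r2 i c2 ≤ k2) (hm : majAt r1 k1 c1) : majAt r2 k2 c2 :=
  le_trans hm (score_le r1 r2 k1 k2 c1 c2 h)

private lemma le_shift {C : Type*} [DecidableEq C] {n : ℕ} (rank : Fin n → C → ℕ) (p : C)
    (t : Fin n → ℕ) (i : Fin n) (c : C) (hc : c ≠ p) :
    rank i c ≤ shiftRank rank p t i c := by
  unfold shiftRank
  rw [if_neg hc]
  split_ifs <;> omega

private lemma shift_le {C : Type*} [DecidableEq C] {n : ℕ} (rank : Fin n → C → ℕ) (p : C)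
    (t : Fin n → ℕ) (hr : ∀ i c, 1 ≤ rank i c) (i : Fin n) (c : C) :
    shiftRank rank p t i c ≤ rank i c + 1 := by
  unfold shiftRank
  split_ifs with h1 h2
  · subst h1; have := hr i c; omega
  · omega
  · omega

/-- if `k` is the Bucklin winning round of the original election and `t` is a
minimal optimal shift action making `p` a simplified Bucklin winner, then the Bucklin
winning round `ℓ` of the shifted election satisfies `k ≤ ℓ ≤ k + 1`. -/
theorem statement2 {C : Type*} [Fintype C] [DecidableEq C] {n m : ℕ}
    (rank : Fin n → C → ℕ)
    (hcard : Fintype.card C = m)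
    (hinj : ∀ i, Function.Injective (rank i))
    (hrange : ∀ i c, 1 ≤ rank i c ∧ rank i c ≤ m)
    (π : Fin n → ℕ → ℕ∞) (hπ0 : ∀ i, π i 0 = 0) (hπmono : ∀ i, Monotone (π i))
    (p : C) (t : Fin n → ℕ)
    (hwin : IsSimpBucklinWinner (shiftRank rank p t) p)
    (hopt : ∀ s : Fin n → ℕ, IsSimpBucklinWinner (shiftRank rank p s) p →
      briberyCost π t ≤ briberyCost π s)
    (hmin : ∀ s : Fin n → ℕ, s ≠ t → (∀ i, s i ≤ t i) →
      ¬ IsSimpBucklinWinner (shiftRank rank p s) p)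
    (k : ℕ) (hk : IsBucklinRound rank k)
    (ℓ : ℕ) (hℓ : IsBucklinRound (shiftRank rank p t) ℓ) :
    k ≤ ℓ ∧ ℓ ≤ k + 1 := by
  obtain ⟨hℓmem, hℓlb⟩ := hℓ
  obtain ⟨hkmem, hklb⟩ := hk
  have hr1 : ∀ i c, 1 ≤ rank i c := fun i c => (hrange i c).1
  constructor
  · -- k ≤ ℓ
    by_contra hlt
    push_neg at hlt
    obtain ⟨c, hc⟩ := hℓmem
    by_cases hcp : c = p
    · rw [hcp] at hc
      set s : Fin n → ℕ := fun i => min (t i) (rank i p - (ℓ + 1)) with hs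
      have hsle : ∀ i, s i ≤ t i := fun i => min_le_left _ _
      have hsne : s ≠ t := by
        intro he
        have hmaj : majAt rank ℓ p := by
          refine maj_le (fun i hi => ?_) hc
          have h1 := congrFun he i
          simp only [hs] at h1
          unfold shiftRank at hi
          rw [if_pos rfl] at hi
          have := hr1 i p
          omega
        exact absurd (hklb ⟨p, hmaj⟩) (by omega)
      have hmajs : majAt (shiftRank rank p s) (ℓ + 1) p := by
        refine maj_le (fun i hi => ?_) hc
        unfold shiftRank at hi ⊢
        rw [if_pos rfl] at hi ⊢
        simp only [hs]
        have := hr1 i p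
        omega
      set S := {j : ℕ | ∃ c : C, majAt (shiftRank rank p s) j c} with hS
      have hne : S.Nonempty := ⟨ℓ + 1, p, hmajs⟩
      have hmem := Nat.sInf_mem hne
      have hround : IsBucklinRound (shiftRank rank p s) (sInf S) :=
        ⟨hmem, fun j hj => Nat.sInf_le hj⟩
      obtain ⟨c', hc'⟩ := hmem
      have hwin' : IsSimpBucklinWinner (shiftRank rank p s) p := by
        by_cases hcp' : c' = p
        · exact ⟨sInf S, hround, hcp' ▸ hc'⟩
        · have h1 : majAt rank (sInf S) c' :=
            maj_le (fun i hi => le_trans (le_shift rank p s i c' hcp') hi) hc'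
          have h2 : k ≤ sInf S := hklb ⟨c', h1⟩
          have h3 : sInf S ≤ ℓ + 1 := Nat.sInf_le ⟨p, hmajs⟩
          have h4 : sInf S = ℓ + 1 := by omega
          exact ⟨sInf S, hround, h4 ▸ hmajs⟩
      exact hmin s hsne hsle hwin'
    · have h1 : majAt rank ℓ c :=
        maj_le (fun i hi => le_trans (le_shift rank p t i c hcp) hi) hc
      exact absurd (hklb ⟨c, h1⟩) (by omega)
  · -- ℓ ≤ k + 1
    obtain ⟨c, hc⟩ := hkmem
    refine hℓlb ⟨c, maj_le (fun i hi => ?_) hc⟩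
    have := shift_le rank p t hr1 i c
    omega
end

section
/- Let E be an election, p a designated candidate with nondecreasing cost functions π^i satisfying π^i(0)=0, fix a candidate c ≠ p and a round k ∈ {1,…,m−1}. Let A = {v^i : rank(c,v^i)=k and rank(p,v^i)=k+1}, B = {v^i : rank(c,v^i)=k and rank(p,v^i) ≥ k+2}, and fix an enumeration w_1,…,w_{|B|} of B. For integers 0 ≤ i ≤ j ≤ |B| and h ≥ 0, let b(i,j,h) ∈ ℤ≥0∪{+∞} be the minimum of Π(t) over all shift actions t such that t_r = 0 for every voter outside A ∪ {w_1,…,w_j}, p has rank at most k+1 in at least i of the votes w_1,…,w_j in shf(E,t), and p has rank at most k in at least h of the votes of A ∪ {w_1,…,w_j} in shf(E,t) (with the minimum over the empty set equal to +∞). Then for all 1 ≤ i ≤ j ≤ |B| and all h ≥ 1: b(i,j,h) = min{ b(i−1,j−1,h) + π^{w_j}(rank(p,w_j)−(k+1)), b(i−1,j−1,h−1) + π^{w_j}(rank(p,w_j)−k), b(i,j−1,h) }, where π^{w_j} denotes the cost function of voter w_j. -/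
lemma aux_sInf_le_add {S S' : Set ℕ∞} {c : ℕ∞}
    (h : ∀ x ∈ S', ∃ y ∈ S, y ≤ x + c) : sInf S ≤ sInf S' + c := by
  rcases S'.eq_empty_or_nonempty with rfl | hne
  · simp
  · obtain ⟨y, hy, hle⟩ := h _ (csInf_mem hne)
    exact le_trans (sInf_le hy) hle

lemma aux_filter_split {N j : ℕ} (hj1 : 1 ≤ j) (hjN : j ≤ N) (P : Fin N → Prop) [DecidablePred P] :
    (Finset.univ.filter (fun x : Fin N => (x : ℕ) < j ∧ P x)).card
      = (Finset.univ.filter (fun x : Fin N => (x : ℕ) < j - 1 ∧ P x)).card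
        + (if P ⟨j - 1, by omega⟩ then 1 else 0) := by
  have h2 : Finset.univ.filter (fun x : Fin N => x = (⟨j - 1, by omega⟩ : Fin N) ∧ P x)
      = if P ⟨j - 1, by omega⟩ then {(⟨j - 1, by omega⟩ : Fin N)} else ∅ := by
    split
    · next hp => ext x; simp +contextual [hp]
    · next hp => ext x; simp +contextual; intro hx; rw [hx] at *; exact fun h => hp h
  have h1 : Finset.univ.filter (fun x : Fin N => (x : ℕ) < j ∧ P x)
      = Finset.univ.filter (fun x : Fin N => (x : ℕ) < j - 1 ∧ P x)
        ∪ Finset.univ.filter (fun x : Fin N => x = ⟨j - 1, by omega⟩ ∧ P x) := by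
    ext x
    simp only [Finset.mem_filter, Finset.mem_univ, true_and, Finset.mem_union, Fin.ext_iff]
    constructor
    · rintro ⟨hx, hp⟩
      rcases Nat.lt_or_ge (x : ℕ) (j - 1) with hl | hg
      · exact Or.inl ⟨hl, hp⟩
      · exact Or.inr ⟨by omega, hp⟩
    · rintro (⟨hx, hp⟩ | ⟨hx, hp⟩)
      · exact ⟨by omega, hp⟩
      · exact ⟨by omega, hp⟩
  rw [h1, Finset.card_union_of_disjoint, h2]
  · congr 1
    split <;> simp
  · rw [Finset.disjoint_left]
    rintro x hx hx'
    simp only [Finset.mem_filter, Finset.mem_univ, true_and, Fin.ext_iff] at hx hx'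
    omega

lemma aux_filter_insert {α : Type*} [DecidableEq α] (S : Finset α) (a : α) (ha : a ∉ S)
    (Q : α → Prop) [DecidablePred Q] :
    ((S ∪ {a}).filter Q).card = (S.filter Q).card + (if Q a then 1 else 0) := by
  rw [Finset.filter_union, Finset.filter_singleton]
  split
  · rw [Finset.card_union_of_disjoint (by simp [Finset.disjoint_singleton_right, ha])]
    simp
  · simp

lemma aux_cost_update {n : ℕ} (π : Fin n → ℕ → ℕ∞) (t : Fin n → ℕ) (a : Fin n) (v : ℕ) :
    briberyCost π (Function.update t a v) = (∑ x ∈ Finset.univ.erase a, π x (t x)) + π a v := by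
  unfold briberyCost
  rw [← Finset.sum_erase_add _ _ (Finset.mem_univ a), Function.update_self]
  congr 1
  exact Finset.sum_congr rfl fun x hx => by
    rw [Function.update_of_ne (Finset.mem_erase.1 hx).1]

lemma aux_cost_split {n : ℕ} (π : Fin n → ℕ → ℕ∞) (t : Fin n → ℕ) (a : Fin n) :
    briberyCost π t = (∑ x ∈ Finset.univ.erase a, π x (t x)) + π a (t a) := by
  conv_lhs => rw [← Function.update_eq_self a t]
  exact aux_cost_update π t a (t a)

/-- the dynamic-programming recurrence for the quantities `b(i,j,h)`. -/
theorem statement5 {C : Type*} [Fintype C] [DecidableEq C] {n m : ℕ}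
    (rank : Fin n → C → ℕ)
    (hcard : Fintype.card C = m)
    (hinj : ∀ i, Function.Injective (rank i))
    (hrange : ∀ i c, 1 ≤ rank i c ∧ rank i c ≤ m)
    (π : Fin n → ℕ → ℕ∞) (hπ0 : ∀ i, π i 0 = 0) (hπmono : ∀ i, Monotone (π i))
    (p c : C) (hcp : c ≠ p)
    (k : ℕ) (hk1 : 1 ≤ k) (hkm : k + 1 ≤ m)
    (A B : Finset (Fin n))
    (hA : A = Finset.univ.filter (fun i : Fin n => rank i c = k ∧ rank i p = k + 1))
    (hB : B = Finset.univ.filter (fun i : Fin n => rank i c = k ∧ k + 2 ≤ rank i p))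
    (w : Fin B.card → Fin n) (hwinj : Function.Injective w) (hwB : ∀ x, w x ∈ B)
    (b : ℕ → ℕ → ℕ → ℕ∞)
    (hb : ∀ i j h : ℕ,
      b i j h = sInf ((fun t : Fin n → ℕ => briberyCost π t) ''
        {t : Fin n → ℕ |
          (∀ r : Fin n,
              r ∉ A ∪ Finset.image w
                  (Finset.univ.filter (fun x : Fin B.card => (x : ℕ) < j)) →
              t r = 0) ∧
          i ≤ (Finset.univ.filter (fun x : Fin B.card =>
                  (x : ℕ) < j ∧ shiftRank rank p t (w x) p ≤ k + 1)).card ∧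
          h ≤ ((A ∪ Finset.image w
                  (Finset.univ.filter (fun x : Fin B.card => (x : ℕ) < j))).filter
                  (fun r : Fin n => shiftRank rank p t r p ≤ k)).card}))
    (i j h : ℕ) (hi : 1 ≤ i) (hij : i ≤ j) (hj : j ≤ B.card) (hh : 1 ≤ h) :
    b i j h =
      min (min
        (b (i - 1) (j - 1) h +
          π (w ⟨j - 1, by omega⟩) (rank (w ⟨j - 1, by omega⟩) p - (k + 1)))
        (b (i - 1) (j - 1) (h - 1) +
          π (w ⟨j - 1, by omega⟩) (rank (w ⟨j - 1, by omega⟩) p - k)))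
        (b i (j - 1) h) := by
  have hj1 : 1 ≤ j := hi.trans hij
  have hjlt : j - 1 < B.card := by omega
  set wj : Fin n := w ⟨j - 1, hjlt⟩ with hwj_def
  have hwjB : wj ∈ B := hwB _
  rw [hB, Finset.mem_filter] at hwjB
  have hR : k + 2 ≤ rank wj p := hwjB.2.2
  -- splitting the image
  have himg : Finset.image w (Finset.univ.filter (fun x : Fin B.card => (x : ℕ) < j))
      = Finset.image w (Finset.univ.filter (fun x : Fin B.card => (x : ℕ) < j - 1)) ∪ {wj} := by
    ext r
    simp only [Finset.mem_image, Finset.mem_filter, Finset.mem_univ, true_and,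
      Finset.mem_union, Finset.mem_singleton]
    constructor
    · rintro ⟨x, hx, rfl⟩
      rcases Nat.lt_or_ge (x : ℕ) (j - 1) with hl | hg
      · exact Or.inl ⟨x, hl, rfl⟩
      · refine Or.inr ?_
        rw [hwj_def]
        exact congrArg w (Fin.ext (show (x:ℕ) = j - 1 by omega))
    · rintro (⟨x, hx, rfl⟩ | rfl)
      · exact ⟨x, by omega, rfl⟩
      · exact ⟨⟨j - 1, hjlt⟩, show j - 1 < j by omega, rfl⟩
  have hwjA : wj ∉ A := by
    rw [hA, Finset.mem_filter]
    rintro ⟨-, -, h2⟩; omega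
  have hwjI : wj ∉ A ∪ Finset.image w
      (Finset.univ.filter (fun x : Fin B.card => (x : ℕ) < j - 1)) := by
    simp only [Finset.mem_union, Finset.mem_image, Finset.mem_filter, Finset.mem_univ, true_and]
    rintro (hmem | ⟨x, hx, hxe⟩)
    · exact hwjA hmem
    · rw [hwj_def] at hxe
      have h3 : (x:ℕ) = j - 1 := congrArg Fin.val (hwinj hxe)
      omega
  have hU : A ∪ Finset.image w (Finset.univ.filter (fun x : Fin B.card => (x : ℕ) < j))
      = (A ∪ Finset.image w (Finset.univ.filter (fun x : Fin B.card => (x : ℕ) < j - 1)))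
        ∪ {wj} := by
    rw [himg, Finset.union_assoc]
  have hsr : ∀ (t : Fin n → ℕ) (r : Fin n),
      shiftRank rank p t r p = max 1 (rank r p - t r) := by
    intro t r; simp [shiftRank]
  have hwx : ∀ x : Fin B.card, (x : ℕ) < j - 1 → w x ≠ wj := by
    intro x hx he
    rw [hwj_def] at he
    have h3 : (x:ℕ) = j - 1 := congrArg Fin.val (hwinj he)
    omega
  have hupd : ∀ (t : Fin n → ℕ) (v : ℕ) (r : Fin n), r ≠ wj →
      shiftRank rank p (Function.update t wj v) r p = shiftRank rank p t r p := by
    intro t v r hr; rw [hsr, hsr, Function.update_of_ne hr]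
  -- count invariance under updating at wj
  have hic : ∀ (t : Fin n → ℕ) (v : ℕ),
      Finset.univ.filter (fun x : Fin B.card =>
        (x : ℕ) < j - 1 ∧ shiftRank rank p (Function.update t wj v) (w x) p ≤ k + 1)
      = Finset.univ.filter (fun x : Fin B.card =>
        (x : ℕ) < j - 1 ∧ shiftRank rank p t (w x) p ≤ k + 1) := by
    intro t v
    refine Finset.filter_congr fun x _ => and_congr_right fun hx => ?_
    rw [hupd t v (w x) (hwx x hx)]
  have hhc : ∀ (t : Fin n → ℕ) (v : ℕ),
      ((A ∪ Finset.image w (Finset.univ.filter (fun x : Fin B.card => (x : ℕ) < j - 1))).filter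
        (fun r : Fin n => shiftRank rank p (Function.update t wj v) r p ≤ k))
      = ((A ∪ Finset.image w (Finset.univ.filter (fun x : Fin B.card => (x : ℕ) < j - 1))).filter
        (fun r : Fin n => shiftRank rank p t r p ≤ k)) := by
    intro t v
    refine Finset.filter_congr fun r hr => ?_
    rw [hupd t v r (fun he => hwjI (he ▸ hr))]
  -- the update value at wj
  have hatwj : ∀ (t : Fin n → ℕ) (v : ℕ),
      shiftRank rank p (Function.update t wj v) wj p = max 1 (rank wj p - v) := by
    intro t v; rw [hsr, Function.update_self]
  rw [hb i j h, hb (i-1) (j-1) h, hb (i-1) (j-1) (h-1), hb i (j-1) h]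
  apply le_antisymm
  · refine le_min (le_min ?_ ?_) ?_
    · -- from (i-1, j-1, h), shift wj to position k+1
      apply aux_sInf_le_add
      rintro x ⟨t, ⟨ht0, hti, hth⟩, rfl⟩
      have htwj : t wj = 0 := ht0 wj hwjI
      refine ⟨briberyCost π (Function.update t wj (rank wj p - (k+1))),
        ⟨Function.update t wj (rank wj p - (k+1)), ⟨?_, ?_, ?_⟩, rfl⟩, ?_⟩
      · intro r hr
        have hrwj : r ≠ wj := by
          rintro rfl
          exact hr (by
            rw [hU]
            exact Finset.mem_union_right _ (Finset.mem_singleton_self _))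
        rw [Function.update_of_ne hrwj]
        refine ht0 r fun hmem => hr ?_
        rw [hU]
        exact Finset.mem_union_left _ hmem
      · rw [aux_filter_split hj1 hj, hic]
        have hind : shiftRank rank p (Function.update t wj (rank wj p - (k+1))) wj p <= k + 1 := by
          rw [hatwj]; omega
        split
        · omega
        · next hneg => exact absurd hind hneg
      · rw [hU, aux_filter_insert _ wj hwjI, hhc]
        have hind : ¬ (shiftRank rank p (Function.update t wj (rank wj p - (k+1))) wj p ≤ k) := by
          rw [hatwj]; omega
        split
        · next hpos => exact absurd hpos hind
        · omega
      · show briberyCost π (Function.update t wj (rank wj p - (k+1)))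
            ≤ briberyCost π t + π wj (rank wj p - (k+1))
        rw [aux_cost_update, aux_cost_split π t wj, htwj, hπ0, add_zero]
    · -- from (i-1, j-1, h-1), shift wj to position k
      apply aux_sInf_le_add
      rintro x ⟨t, ⟨ht0, hti, hth⟩, rfl⟩
      have htwj : t wj = 0 := ht0 wj hwjI
      refine ⟨briberyCost π (Function.update t wj (rank wj p - k)),
        ⟨Function.update t wj (rank wj p - k), ⟨?_, ?_, ?_⟩, rfl⟩, ?_⟩
      · intro r hr
        have hrwj : r ≠ wj := by
          rintro rfl
          exact hr (by
            rw [hU]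
            exact Finset.mem_union_right _ (Finset.mem_singleton_self _))
        rw [Function.update_of_ne hrwj]
        refine ht0 r fun hmem => hr ?_
        rw [hU]
        exact Finset.mem_union_left _ hmem
      · rw [aux_filter_split hj1 hj, hic]
        have hind : shiftRank rank p (Function.update t wj (rank wj p - k)) wj p ≤ k + 1 := by
          rw [hatwj]; omega
        split
        · omega
        · next hneg => exact absurd hind hneg
      · rw [hU, aux_filter_insert _ wj hwjI, hhc]
        have hind : shiftRank rank p (Function.update t wj (rank wj p - k)) wj p ≤ k := by
          rw [hatwj]; omega
        split
        · omega
        · next hneg => exact absurd hind hneg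
      · show briberyCost π (Function.update t wj (rank wj p - k))
            ≤ briberyCost π t + π wj (rank wj p - k)
        rw [aux_cost_update, aux_cost_split π t wj, htwj, hπ0, add_zero]
    · -- from (i, j-1, h)
      apply sInf_le_sInf
      apply Set.image_mono
      rintro t ⟨ht0, hti, hth⟩
      refine ⟨?_, ?_, ?_⟩
      · intro r hr
        refine ht0 r fun hmem => hr ?_
        rw [hU]
        exact Finset.mem_union_left _ hmem
      · rw [aux_filter_split hj1 hj]
        split <;> omega
      · rw [hU, aux_filter_insert _ wj hwjI]
        split <;> omega
  · apply le_sInf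
    rintro x ⟨t, ⟨ht0, hti, hth⟩, rfl⟩
    rw [aux_filter_split hj1 hj] at hti
    rw [hU, aux_filter_insert _ wj hwjI] at hth
    have hcostt : briberyCost π t
        = (∑ x ∈ Finset.univ.erase wj, π x (t x)) + π wj (t wj) := aux_cost_split π t wj
    have hcostt' : briberyCost π (Function.update t wj 0)
        = (∑ x ∈ Finset.univ.erase wj, π x (t x)) := by
      rw [aux_cost_update, hπ0, add_zero]
    have hsupp : ∀ r : Fin n, r ∉ A ∪ Finset.image w
        (Finset.univ.filter (fun x : Fin B.card => (x : ℕ) < j - 1)) →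
        Function.update t wj 0 r = 0 := by
      intro r hr
      rcases eq_or_ne r wj with rfl | hne
      · rw [Function.update_self]
      · rw [Function.update_of_ne hne]
        apply ht0
        rw [hU, Finset.mem_union, Finset.mem_singleton]
        rintro (hmem | rfl)
        · exact hr hmem
        · exact hne rfl
    by_cases hv2 : rank wj p ≤ t wj + k
    · -- wj is shifted to position ≤ k: compare with the second term
      refine le_trans (le_trans (min_le_left _ _) (min_le_right _ _)) ?_
      have hmem : briberyCost π (Function.update t wj 0) ∈
          ((fun t : Fin n → ℕ => briberyCost π t) ''
          {t : Fin n → ℕ |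
            (∀ r : Fin n, r ∉ A ∪ Finset.image w
                (Finset.univ.filter (fun x : Fin B.card => (x : ℕ) < j - 1)) → t r = 0) ∧
            i - 1 ≤ (Finset.univ.filter (fun x : Fin B.card =>
                (x : ℕ) < j - 1 ∧ shiftRank rank p t (w x) p ≤ k + 1)).card ∧
            h - 1 ≤ ((A ∪ Finset.image w
                (Finset.univ.filter (fun x : Fin B.card => (x : ℕ) < j - 1))).filter
                (fun r : Fin n => shiftRank rank p t r p ≤ k)).card}) := by
        refine ⟨Function.update t wj 0, ⟨hsupp, ?_, ?_⟩, rfl⟩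
        · rw [hic]
          split at hti <;> omega
        · rw [hhc]
          split at hth <;> omega
      calc sInf _ + π wj (rank wj p - k)
          ≤ briberyCost π (Function.update t wj 0) + π wj (rank wj p - k) :=
            add_le_add_left (sInf_le hmem) _
        _ ≤ briberyCost π (Function.update t wj 0) + π wj (t wj) :=
            add_le_add_right (hπmono wj (by omega)) _
        _ = briberyCost π t := by rw [hcostt', hcostt]
    · by_cases hv1 : rank wj p ≤ t wj + (k + 1)
      · -- wj shifted exactly to position k+1: compare with the first term
        refine le_trans (le_trans (min_le_left _ _) (min_le_left _ _)) ?_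
        have hindk : ¬ (shiftRank rank p t wj p ≤ k) := by rw [hsr]; omega
        rw [if_neg hindk, add_zero] at hth
        have hmem : briberyCost π (Function.update t wj 0) ∈
            ((fun t : Fin n → ℕ => briberyCost π t) ''
            {t : Fin n → ℕ |
              (∀ r : Fin n, r ∉ A ∪ Finset.image w
                  (Finset.univ.filter (fun x : Fin B.card => (x : ℕ) < j - 1)) → t r = 0) ∧
              i - 1 ≤ (Finset.univ.filter (fun x : Fin B.card =>
                  (x : ℕ) < j - 1 ∧ shiftRank rank p t (w x) p ≤ k + 1)).card ∧
              h ≤ ((A ∪ Finset.image w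
                  (Finset.univ.filter (fun x : Fin B.card => (x : ℕ) < j - 1))).filter
                  (fun r : Fin n => shiftRank rank p t r p ≤ k)).card}) := by
          refine ⟨Function.update t wj 0, ⟨hsupp, ?_, ?_⟩, rfl⟩
          · rw [hic]
            split at hti <;> omega
          · rw [hhc]
            exact hth
        have hπeq : π wj (rank wj p - (k + 1)) = π wj (t wj) := by
          congr 1
          omega
        calc sInf _ + π wj (rank wj p - (k + 1))
            ≤ briberyCost π (Function.update t wj 0) + π wj (rank wj p - (k + 1)) :=
              add_le_add_left (sInf_le hmem) _
          _ = briberyCost π t := by rw [hπeq, hcostt', hcostt]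
      · -- wj stays below position k+1: compare with the third term
        refine le_trans (min_le_right _ _) ?_
        have hindk : ¬ (shiftRank rank p t wj p ≤ k) := by rw [hsr]; omega
        have hindk1 : ¬ (shiftRank rank p t wj p ≤ k + 1) := by rw [hsr]; omega
        rw [if_neg hindk, add_zero] at hth
        rw [if_neg hindk1, add_zero] at hti
        have hmem : briberyCost π (Function.update t wj 0) ∈
            ((fun t : Fin n → ℕ => briberyCost π t) ''
            {t : Fin n → ℕ |
              (∀ r : Fin n, r ∉ A ∪ Finset.image w
                  (Finset.univ.filter (fun x : Fin B.card => (x : ℕ) < j - 1)) → t r = 0) ∧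
              i ≤ (Finset.univ.filter (fun x : Fin B.card =>
                  (x : ℕ) < j - 1 ∧ shiftRank rank p t (w x) p ≤ k + 1)).card ∧
              h ≤ ((A ∪ Finset.image w
                  (Finset.univ.filter (fun x : Fin B.card => (x : ℕ) < j - 1))).filter
                  (fun r : Fin n => shiftRank rank p t r p ≤ k)).card}) := by
          refine ⟨Function.update t wj 0, ⟨hsupp, ?_, ?_⟩, rfl⟩
          · rw [hic]
            exact hti
          · rw [hhc]
            exact hth
        calc sInf _ ≤ briberyCost π (Function.update t wj 0) := sInf_le hmem
          _ ≤ (∑ x ∈ Finset.univ.erase wj, π x (t x)) + π wj (t wj) := by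
              rw [hcostt']; exact le_self_add
          _ = briberyCost π t := hcostt.symm
end

section
/- Let E be an election with Bucklin winning round k ≥ 2, and let p be a designated candidate. If t is a shift action such that the (k−1)-Approval score of p in shf(E,t) is at least ⌊n/2⌋+1, then p is the unique Bucklin winner and the unique simplified Bucklin winner of shf(E,t). -/
/-- `c` is a Bucklin winner: `c` maximizes the `k_B`-Approval score, where `k_B` is the
Bucklin winning round. -/
def IsBucklinWinner {C : Type*} {n : ℕ} (rank : Fin n → C → ℕ) (c : C) : Prop :=
  ∃ k, IsBucklinRound rank k ∧
    ∀ c' : C, approvalScoreAt rank k c' ≤ approvalScoreAt rank k c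

/-- if the Bucklin winning round of `E` is `k ≥ 2` and a shift action gives
`p` a `(k−1)`-Approval score of at least `⌊n/2⌋+1` in the shifted election, then `p` is
the unique Bucklin winner and the unique simplified Bucklin winner of the shifted
election. -/
theorem statement6 {C : Type*} [Fintype C] [DecidableEq C] {n m : ℕ}
    (rank : Fin n → C → ℕ)
    (hcard : Fintype.card C = m)
    (hinj : ∀ i, Function.Injective (rank i))
    (hrange : ∀ i c, 1 ≤ rank i c ∧ rank i c ≤ m)
    (k : ℕ) (hk2 : 2 ≤ k) (hround : IsBucklinRound rank k)
    (p : C) (t : Fin n → ℕ)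
    (hscore : n / 2 + 1 ≤ approvalScoreAt (shiftRank rank p t) (k - 1) p) :
    (IsBucklinWinner (shiftRank rank p t) p ∧
      ∀ c : C, IsBucklinWinner (shiftRank rank p t) c → c = p) ∧
    (IsSimpBucklinWinner (shiftRank rank p t) p ∧
      ∀ c : C, IsSimpBucklinWinner (shiftRank rank p t) c → c = p) := by
  classical
  set r' := shiftRank rank p t with hr'
  have hmono : ∀ c, c ≠ p → ∀ j, approvalScoreAt r' j c ≤ approvalScoreAt rank j c := by
    intro c hc j
    apply Finset.card_le_card
    intro i hi
    simp only [Finset.mem_filter, Finset.mem_univ, true_and] at hi ⊢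
    have : rank i c ≤ r' i c := by
      simp only [hr', shiftRank, if_neg hc]
      split <;> omega
    omega
  have hnom : ∀ j, j < k → ∀ c, c ≠ p → ¬ majAt r' j c := by
    intro j hj c hc hm
    have h1 : majAt rank j c := le_trans hm (hmono c hc j)
    have := hround.2 ⟨c, h1⟩
    omega
  have hP : ∃ j, ∃ c : C, majAt r' j c := ⟨k - 1, p, hscore⟩
  set k' := Nat.find hP with hk'
  have hk'le : k' ≤ k - 1 := Nat.find_min' hP ⟨p, hscore⟩
  have hk'lt : k' < k := by omega
  obtain ⟨c0, hc0⟩ := Nat.find_spec hP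
  have hcp : c0 = p := by
    by_contra h
    exact hnom k' hk'lt c0 h hc0
  have hmajp : majAt r' k' p := hcp ▸ hc0
  have hroundp : IsBucklinRound r' k' :=
    ⟨⟨p, hmajp⟩, fun j hj => Nat.find_min' hP hj⟩
  have hmax : ∀ c' : C, approvalScoreAt r' k' c' ≤ approvalScoreAt r' k' p := by
    intro c'
    by_cases h : c' = p
    · subst h; exact le_refl _
    · have h2 := hnom k' hk'lt c' h
      unfold majAt at h2 hmajp
      omega
  have huniq : ∀ c : C, majAt r' k' c → c = p := by
    intro c hm
    by_contra h
    exact hnom k' hk'lt c h hm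
  refine ⟨⟨⟨k', hroundp, hmax⟩, ?_⟩, ⟨⟨k', hroundp, hmajp⟩, ?_⟩⟩
  · rintro c ⟨k'', hk'', hmax''⟩
    have hkk : k'' = k' := hk''.unique hroundp
    rw [hkk] at hmax''
    exact huniq c (le_trans hmajp (hmax'' p))
  · rintro c ⟨k'', hk'', hm''⟩
    have hkk : k'' = k' := hk''.unique hroundp
    rw [hkk] at hm''
    exact huniq c hm''
end

section
/- Let G be a graph with vertex set 𝒱 = {ν_1,…,ν_N}, where N ≥ 2, and let k be an integer with 0 ≤ k ≤ N−2. Let E be any election obtained by the negative-cost Fallback construction for (G,k). Then for every subset S ⊆ 𝒱 with |S| = k: the candidate p is a Fallback winner (equivalently, a simplified Fallback winner — and then in fact the unique winner) of the election obtained from E by setting the approval count of the voter x_i to 0 for every ν_i ∈ S and leaving all other votes unchanged, if and only if S is a dominating set of G. -/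
section Fallback

variable {C W : Type*} [Fintype W]

/-- Voters who approve `c` and rank `c` in their top `k` positions. -/
def fbApproversAt (rank : W → C → ℕ) (ℓcnt : W → ℕ) (k : ℕ) (c : C) : Finset W :=
  Finset.univ.filter (fun w => rank w c ≤ k ∧ rank w c ≤ ℓcnt w)

/-- The approval score of `c`: the number of voters approving `c`. -/
def fbApprovalScore (rank : W → C → ℕ) (ℓcnt : W → ℕ) (c : C) : ℕ :=
  (Finset.univ.filter (fun w => rank w c ≤ ℓcnt w)).card

/-- `c` reaches majority at round `k`. -/
def fbMajAt (rank : W → C → ℕ) (ℓcnt : W → ℕ) (k : ℕ) (c : C) : Prop :=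
  Fintype.card W / 2 + 1 ≤ (fbApproversAt rank ℓcnt k c).card

/-- `c` is a Fallback winner. -/
def IsFallbackWinner (rank : W → C → ℕ) (ℓcnt : W → ℕ) (c : C) : Prop :=
  (∃ kB, IsLeast {k : ℕ | ∃ c' : C, fbMajAt rank ℓcnt k c'} kB ∧
      ∀ c' : C, (fbApproversAt rank ℓcnt kB c').card ≤ (fbApproversAt rank ℓcnt kB c).card) ∨
  ((¬ ∃ k : ℕ, ∃ c' : C, fbMajAt rank ℓcnt k c') ∧
      ∀ c' : C, fbApprovalScore rank ℓcnt c' ≤ fbApprovalScore rank ℓcnt c)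

/-- `c` is a simplified Fallback winner. -/
def IsSimpFallbackWinner (rank : W → C → ℕ) (ℓcnt : W → ℕ) (c : C) : Prop :=
  (∃ kB, IsLeast {k : ℕ | ∃ c' : C, fbMajAt rank ℓcnt k c'} kB ∧ fbMajAt rank ℓcnt kB c) ∨
  ((¬ ∃ k : ℕ, ∃ c' : C, fbMajAt rank ℓcnt k c') ∧
      ∀ c' : C, fbApprovalScore rank ℓcnt c' ≤ fbApprovalScore rank ℓcnt c)

end Fallback

/-- The closed neighborhood of a vertex, as a finset. -/
def closedNbhd {V : Type*} [Fintype V] [DecidableEq V] (G : SimpleGraph V)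
    [DecidableRel G.Adj] (v : V) : Finset V :=
  insert v (G.neighborFinset v)

/-- The voters of the negative-cost Fallback construction: the voters `x_i` (`i ∈ 𝒱`),
the voters `x̄_i` (`i ∈ 𝒱`), `2N+1` voters, `N+k` voters, one voter, and `N−k−2` voters. -/
abbrev NegVoter (V : Type*) (N k : ℕ) :=
  (V ⊕ V) ⊕ ((Fin (2 * N + 1) ⊕ Fin (N + k)) ⊕ (Fin 1 ⊕ Fin (N - k - 2)))

/-- The voter `x_i` of the negative-cost construction. -/
def negX {V : Type*} (N k : ℕ) (i : V) : NegVoter V N k := Sum.inl (Sum.inl i)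

/-- The voter `x̄_i` of the negative-cost construction. -/
def negXbar {V : Type*} (N k : ℕ) (i : V) : NegVoter V N k := Sum.inl (Sum.inr i)

/-- One of the `2N+1` voters `𝒱 ≻ … ≻ b`. -/
def negY3 {V : Type*} (N k : ℕ) (j : Fin (2 * N + 1)) : NegVoter V N k :=
  Sum.inr (Sum.inl (Sum.inl j))

/-- One of the `N+k` voters `a ≻ … ≻ p ≻ b`. -/
def negY4 {V : Type*} (N k : ℕ) (j : Fin (N + k)) : NegVoter V N k :=
  Sum.inr (Sum.inl (Sum.inr j))

/-- The single voter `… ≻ p ≻ b`. -/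
def negY5 {V : Type*} (N k : ℕ) (j : Fin 1) : NegVoter V N k :=
  Sum.inr (Sum.inr (Sum.inl j))

/-- One of the `N−k−2` voters `… ≻ b`. -/
def negY6 {V : Type*} (N k : ℕ) (j : Fin (N - k - 2)) : NegVoter V N k :=
  Sum.inr (Sum.inr (Sum.inr j))


lemma card_filter_sum {α β : Type*} [Fintype α] [Fintype β]
    (q : α ⊕ β → Prop) [DecidablePred q] :
    (Finset.univ.filter q).card =
      (Finset.univ.filter (fun x : α => q (Sum.inl x))).card +
      (Finset.univ.filter (fun x : β => q (Sum.inr x))).card := by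
  have h1 : (Finset.univ.filter q).toLeft = Finset.univ.filter (fun x : α => q (Sum.inl x)) := by
    ext x; simp
  have h2 : (Finset.univ.filter q).toRight = Finset.univ.filter (fun x : β => q (Sum.inr x)) := by
    ext x; simp
  rw [← Finset.card_toLeft_add_card_toRight, h1, h2]

lemma negvoter_card_filter {V : Type*} [Fintype V] {N k : ℕ}
    (q : NegVoter V N k → Prop) [DecidablePred q] :
    (Finset.univ.filter q).card =
      (Finset.univ.filter (fun i : V => q (negX N k i))).card +
      (Finset.univ.filter (fun i : V => q (negXbar N k i))).card +
      (Finset.univ.filter (fun j : Fin (2 * N + 1) => q (negY3 N k j))).card +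
      (Finset.univ.filter (fun j : Fin (N + k) => q (negY4 N k j))).card +
      (Finset.univ.filter (fun j : Fin 1 => q (negY5 N k j))).card +
      (Finset.univ.filter (fun j : Fin (N - k - 2) => q (negY6 N k j))).card := by
  rw [card_filter_sum q, card_filter_sum (fun x => q (Sum.inl x)),
      card_filter_sum (fun x => q (Sum.inr x)),
      card_filter_sum (fun x => q (Sum.inr (Sum.inl x))),
      card_filter_sum (fun x => q (Sum.inr (Sum.inr x)))]
  simp only [negX, negXbar, negY3, negY4, negY5, negY6]
  simp only [add_assoc]
  congr

/-- in the negative-cost Fallback construction for `(G,k)`, for every set `S`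
of `k` vertices, setting the approval count of the voter `x_i` to `0` for every `ν_i ∈ S`
makes `p` a Fallback winner (equivalently, a simplified Fallback winner — and then in fact
the unique winner) if and only if `S` is a dominating set of `G`. -/
theorem statement8 {V C : Type*} [Fintype V] [DecidableEq V] [Fintype C] [DecidableEq C]
    (G : SimpleGraph V) [DecidableRel G.Adj]
    (N k : ℕ) (hN : Fintype.card V = N) (hNk : k + 2 ≤ N)
    (a b p : C) (ι : V → C) (D : Finset C)
    (hι : Function.Injective ι)
    (hab : a ≠ b) (hap : a ≠ p) (hbp : b ≠ p)
    (haD : a ∉ D) (hbD : b ∉ D) (hpD : p ∉ D)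
    (hιa : ∀ v, ι v ≠ a) (hιb : ∀ v, ι v ≠ b) (hιp : ∀ v, ι v ≠ p)
    (hιD : ∀ v, ι v ∉ D)
    (hcover : ∀ x : C, (∃ v, x = ι v) ∨ x = a ∨ x = b ∨ x = p ∨ x ∈ D)
    (rank : NegVoter V N k → C → ℕ)
    (hinj : ∀ w, Function.Injective (rank w))
    (hrange : ∀ w x, 1 ≤ rank w x ∧ rank w x ≤ Fintype.card C)
    (ℓcnt : NegVoter V N k → ℕ)
    (hℓ : ∀ w, ℓcnt w = N + 3)
    -- the voters `x_i : a ≻ N[ν_i] ≻ dummies ≻ p ≻ b |`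
    (hx : ∀ i : V,
      rank (negX N k i) a = 1 ∧
      (∀ v ∈ closedNbhd G i, rank (negX N k i) (ι v) ≤ (closedNbhd G i).card + 1) ∧
      (∀ x : C, 2 ≤ rank (negX N k i) x → rank (negX N k i) x ≤ N + 1 →
        (∀ v ∈ closedNbhd G i, x ≠ ι v) → x ∈ D) ∧
      rank (negX N k i) p = N + 2 ∧ rank (negX N k i) b = N + 3)
    -- the voters `x̄_i : a ≻ 𝒱∖N[ν_i] ≻ dummies ≻ p ≻ b |`
    (hxbar : ∀ i : V,
      rank (negXbar N k i) a = 1 ∧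
      (∀ v ∈ Finset.univ \ closedNbhd G i,
        rank (negXbar N k i) (ι v) ≤ (Finset.univ \ closedNbhd G i).card + 1) ∧
      (∀ x : C, 2 ≤ rank (negXbar N k i) x → rank (negXbar N k i) x ≤ N + 1 →
        (∀ v ∈ Finset.univ \ closedNbhd G i, x ≠ ι v) → x ∈ D) ∧
      rank (negXbar N k i) p = N + 2 ∧ rank (negXbar N k i) b = N + 3)
    -- the `2N+1` voters `𝒱 ≻ dummies ≻ b |`
    (h3 : ∀ j : Fin (2 * N + 1),
      (∀ v : V, rank (negY3 N k j) (ι v) ≤ N) ∧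
      (∀ x : C, N + 1 ≤ rank (negY3 N k j) x → rank (negY3 N k j) x ≤ N + 2 → x ∈ D) ∧
      rank (negY3 N k j) b = N + 3)
    -- the `N+k` voters `a ≻ dummies ≻ p ≻ b |`
    (h4 : ∀ j : Fin (N + k),
      rank (negY4 N k j) a = 1 ∧
      (∀ x : C, 2 ≤ rank (negY4 N k j) x → rank (negY4 N k j) x ≤ N + 1 → x ∈ D) ∧
      rank (negY4 N k j) p = N + 2 ∧ rank (negY4 N k j) b = N + 3)
    -- the voter `dummies ≻ p ≻ b |`
    (h5 : ∀ j : Fin 1,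
      (∀ x : C, rank (negY5 N k j) x ≤ N + 1 → x ∈ D) ∧
      rank (negY5 N k j) p = N + 2 ∧ rank (negY5 N k j) b = N + 3)
    -- the `N−k−2` voters `dummies ≻ b |`
    (h6 : ∀ j : Fin (N - k - 2),
      (∀ x : C, rank (negY6 N k j) x ≤ N + 2 → x ∈ D) ∧
      rank (negY6 N k j) b = N + 3)
    -- each dummy candidate is approved by at most one voter
    (hdummy : ∀ d ∈ D,
      (Finset.univ.filter (fun w : NegVoter V N k => rank w d ≤ ℓcnt w)).card ≤ 1)
    -- the bribed election: the approval count of `x_i` is set to `0` for every `ν_i ∈ S`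
    (S : Finset V) (hS : S.card = k)
    (ℓ' : NegVoter V N k → ℕ)
    (hℓ'S : ∀ i ∈ S, ℓ' (negX N k i) = 0)
    (hℓ'rest : ∀ w : NegVoter V N k, (∀ i ∈ S, w ≠ negX N k i) → ℓ' w = ℓcnt w) :
    (IsFallbackWinner rank ℓ' p ↔ ∀ v : V, ∃ s ∈ S, v ∈ closedNbhd G s) ∧
    (IsSimpFallbackWinner rank ℓ' p ↔ ∀ v : V, ∃ s ∈ S, v ∈ closedNbhd G s) ∧
    ((∀ v : V, ∃ s ∈ S, v ∈ closedNbhd G s) →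
      (∀ c : C, IsFallbackWinner rank ℓ' c → c = p) ∧
      (∀ c : C, IsSimpFallbackWinner rank ℓ' c → c = p)) := by
  classical
  have hkN : k ≤ N := by omega
  have hN2 : 2 ≤ N := by omega
  have hcard6N : Fintype.card (NegVoter V N k) = 6 * N := by
    simp only [NegVoter, Fintype.card_sum, Fintype.card_fin, hN]
    omega
  have hhalf : Fintype.card (NegVoter V N k) / 2 + 1 = 3 * N + 1 := by
    rw [hcard6N]; omega
  have hl'xNS : ∀ i : V, i ∉ S → ℓ' (negX N k i) = N + 3 := by
    intro i hi
    rw [hℓ'rest _ (fun s hs h => hi (by obtain rfl : i = s := (by simpa [negX] using h); exact hs)),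
      hℓ]
  have hl'xbar : ∀ i : V, ℓ' (negXbar N k i) = N + 3 := by
    intro i
    rw [hℓ'rest _ (fun s hs h => by simp [negX, negXbar] at h), hℓ]
  have hl'y3 : ∀ j, ℓ' (negY3 N k j) = N + 3 := by
    intro j
    rw [hℓ'rest _ (fun s hs h => by simp [negX, negY3] at h), hℓ]
  have hl'y4 : ∀ j, ℓ' (negY4 N k j) = N + 3 := by
    intro j
    rw [hℓ'rest _ (fun s hs h => by simp [negX, negY4] at h), hℓ]
  have hl'y5 : ∀ j, ℓ' (negY5 N k j) = N + 3 := by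
    intro j
    rw [hℓ'rest _ (fun s hs h => by simp [negX, negY5] at h), hℓ]
  have hl'y6 : ∀ j, ℓ' (negY6 N k j) = N + 3 := by
    intro j
    rw [hℓ'rest _ (fun s hs h => by simp [negX, negY6] at h), hℓ]
  have hl'le : ∀ w, ℓ' w ≤ N + 3 := by
    intro w
    by_cases h : ∀ i ∈ S, w ≠ negX N k i
    · rw [hℓ'rest w h, hℓ]
    · push_neg at h
      obtain ⟨i, hi, rfl⟩ := h
      rw [hℓ'S i hi]; omega
  have hl'lecnt : ∀ w, ℓ' w ≤ ℓcnt w := fun w => by rw [hℓ]; exact hl'le w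
  have hr1 : ∀ w (x : C), 1 ≤ rank w x := fun w x => (hrange w x).1
  have hCle : ∀ s : Finset V, s.card ≤ N := by
    intro s
    have := Finset.card_le_univ s
    rwa [hN] at this
  have hblock : ∀ w : NegVoter V N k, (∀ v, rank w (ι v) ≤ N) →
      ∀ x : C, (∀ v, x ≠ ι v) → N + 1 ≤ rank w x := by
    intro w hw x hx'
    by_contra hlt
    push_neg at hlt
    have himg : Finset.univ.image (fun v => rank w (ι v)) = Finset.Icc 1 N := by
      apply Finset.eq_of_subset_of_card_le
      · intro r hr
        simp only [Finset.mem_image, Finset.mem_univ, true_and] at hr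
        obtain ⟨v, rfl⟩ := hr
        exact Finset.mem_Icc.2 ⟨hr1 w _, hw v⟩
      · rw [Nat.card_Icc, Finset.card_image_of_injective _ (fun v u h => hι (hinj w h)),
          Finset.card_univ, hN]
        omega
    have hmem : rank w x ∈ Finset.Icc 1 N := Finset.mem_Icc.2 ⟨hr1 w x, by omega⟩
    rw [← himg] at hmem
    simp only [Finset.mem_image, Finset.mem_univ, true_and] at hmem
    obtain ⟨v, hv⟩ := hmem
    exact hx' v (hinj w hv.symm)
  have hrb : ∀ w, rank w b = N + 3 := by
    rintro ((i | i) | ((j | j) | (j | j)))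
    · exact (hx i).2.2.2.2
    · exact (hxbar i).2.2.2.2
    · exact (h3 j).2.2
    · exact (h4 j).2.2.2
    · exact (h5 j).2.2
    · exact (h6 j).2
  have hrp_y3 : ∀ j, N + 4 ≤ rank (negY3 N k j) p := by
    intro j
    have h1 : N + 1 ≤ rank (negY3 N k j) p :=
      hblock _ (h3 j).1 p (fun v => (hιp v).symm)
    have h2 : ¬(rank (negY3 N k j) p ≤ N + 2) := fun h => hpD ((h3 j).2.1 p h1 h)
    have h3' : rank (negY3 N k j) p ≠ N + 3 := fun h =>
      hbp (hinj _ ((h3 j).2.2.trans h.symm))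
    omega
  have hrp_y6 : ∀ j, N + 4 ≤ rank (negY6 N k j) p := by
    intro j
    have h2 : ¬(rank (negY6 N k j) p ≤ N + 2) := fun h => hpD ((h6 j).1 p h)
    have h3' : rank (negY6 N k j) p ≠ N + 3 := fun h =>
      hbp (hinj _ ((h6 j).2.trans h.symm))
    omega
  have hrp : ∀ w, N + 2 ≤ rank w p := by
    rintro ((i | i) | ((j | j) | (j | j)))
    · exact ((hx i).2.2.2.1).ge
    · exact ((hxbar i).2.2.2.1).ge
    · exact le_trans (by omega) (hrp_y3 j)
    · exact ((h4 j).2.2.1).ge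
    · exact ((h5 j).2.1).ge
    · exact le_trans (by omega) (hrp_y6 j)
  have hra_y3 : ∀ j, N + 4 ≤ rank (negY3 N k j) a := by
    intro j
    have h1 : N + 1 ≤ rank (negY3 N k j) a :=
      hblock _ (h3 j).1 a (fun v => (hιa v).symm)
    have h2 : ¬(rank (negY3 N k j) a ≤ N + 2) := fun h => haD ((h3 j).2.1 a h1 h)
    have h3' : rank (negY3 N k j) a ≠ N + 3 := fun h =>
      hab (hinj _ (h.trans (h3 j).2.2.symm))
    omega
  have hra_y5 : ∀ j, N + 4 ≤ rank (negY5 N k j) a := by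
    intro j
    have h2 : ¬(rank (negY5 N k j) a ≤ N + 1) := fun h => haD ((h5 j).1 a h)
    have h3' : rank (negY5 N k j) a ≠ N + 2 := fun h =>
      hap (hinj _ (h.trans (h5 j).2.1.symm))
    have h4' : rank (negY5 N k j) a ≠ N + 3 := fun h =>
      hab (hinj _ (h.trans (h5 j).2.2.symm))
    omega
  have hra_y6 : ∀ j, N + 4 ≤ rank (negY6 N k j) a := by
    intro j
    have h2 : ¬(rank (negY6 N k j) a ≤ N + 2) := fun h => haD ((h6 j).1 a h)
    have h3' : rank (negY6 N k j) a ≠ N + 3 := fun h =>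
      hab (hinj _ (h.trans (h6 j).2.symm))
    omega
  have hrv_x_in : ∀ (i v : V), v ∈ closedNbhd G i → rank (negX N k i) (ι v) ≤ N + 1 := by
    intro i v hv
    have h1 := (hx i).2.1 v hv
    have h2 := hCle (closedNbhd G i)
    omega
  have hrv_x_out : ∀ (i v : V), v ∉ closedNbhd G i → N + 4 ≤ rank (negX N k i) (ι v) := by
    intro i v hv
    have h1 : rank (negX N k i) (ι v) ≠ 1 := fun h =>
      hιa v (hinj _ (h.trans (hx i).1.symm))
    have h2 : ¬(2 ≤ rank (negX N k i) (ι v) ∧ rank (negX N k i) (ι v) ≤ N + 1) := by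
      rintro ⟨ha2, hb2⟩
      exact hιD v ((hx i).2.2.1 (ι v) ha2 hb2 (fun u hu he => hv (by rw [hι he]; exact hu)))
    have h3' : rank (negX N k i) (ι v) ≠ N + 2 := fun h =>
      hιp v (hinj _ (h.trans (hx i).2.2.2.1.symm))
    have h4' : rank (negX N k i) (ι v) ≠ N + 3 := fun h =>
      hιb v (hinj _ (h.trans (hx i).2.2.2.2.symm))
    have := hr1 (negX N k i) (ι v)
    omega
  have hrv_xbar_out : ∀ (i v : V), v ∉ closedNbhd G i → rank (negXbar N k i) (ι v) ≤ N + 1 := by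
    intro i v hv
    have h1 := (hxbar i).2.1 v (Finset.mem_sdiff.2 ⟨Finset.mem_univ v, hv⟩)
    have h2 := hCle (Finset.univ \ closedNbhd G i)
    omega
  have hrv_xbar_in : ∀ (i v : V), v ∈ closedNbhd G i → N + 4 ≤ rank (negXbar N k i) (ι v) := by
    intro i v hv
    have h1 : rank (negXbar N k i) (ι v) ≠ 1 := fun h =>
      hιa v (hinj _ (h.trans (hxbar i).1.symm))
    have h2 : ¬(2 ≤ rank (negXbar N k i) (ι v) ∧ rank (negXbar N k i) (ι v) ≤ N + 1) := by
      rintro ⟨ha2, hb2⟩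
      refine hιD v ((hxbar i).2.2.1 (ι v) ha2 hb2 (fun u hu he => ?_))
      rw [Finset.mem_sdiff] at hu
      exact hu.2 (by rw [← hι he]; exact hv)
    have h3' : rank (negXbar N k i) (ι v) ≠ N + 2 := fun h =>
      hιp v (hinj _ (h.trans (hxbar i).2.2.2.1.symm))
    have h4' : rank (negXbar N k i) (ι v) ≠ N + 3 := fun h =>
      hιb v (hinj _ (h.trans (hxbar i).2.2.2.2.symm))
    have := hr1 (negXbar N k i) (ι v)
    omega
  have hrv_y4 : ∀ j (v : V), N + 4 ≤ rank (negY4 N k j) (ι v) := by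
    intro j v
    have h1 : rank (negY4 N k j) (ι v) ≠ 1 := fun h =>
      hιa v (hinj _ (h.trans (h4 j).1.symm))
    have h2 : ¬(2 ≤ rank (negY4 N k j) (ι v) ∧ rank (negY4 N k j) (ι v) ≤ N + 1) :=
      fun hcon => hιD v ((h4 j).2.1 (ι v) hcon.1 hcon.2)
    have h3' : rank (negY4 N k j) (ι v) ≠ N + 2 := fun h =>
      hιp v (hinj _ (h.trans (h4 j).2.2.1.symm))
    have h4' : rank (negY4 N k j) (ι v) ≠ N + 3 := fun h =>
      hιb v (hinj _ (h.trans (h4 j).2.2.2.symm))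
    have := hr1 (negY4 N k j) (ι v)
    omega
  have hrv_y5 : ∀ j (v : V), N + 4 ≤ rank (negY5 N k j) (ι v) := by
    intro j v
    have h2 : ¬(rank (negY5 N k j) (ι v) ≤ N + 1) := fun h => hιD v ((h5 j).1 (ι v) h)
    have h3' : rank (negY5 N k j) (ι v) ≠ N + 2 := fun h =>
      hιp v (hinj _ (h.trans (h5 j).2.1.symm))
    have h4' : rank (negY5 N k j) (ι v) ≠ N + 3 := fun h =>
      hιb v (hinj _ (h.trans (h5 j).2.2.symm))
    omega
  have hrv_y6 : ∀ j (v : V), N + 4 ≤ rank (negY6 N k j) (ι v) := by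
    intro j v
    have h2 : ¬(rank (negY6 N k j) (ι v) ≤ N + 2) := fun h => hιD v ((h6 j).1 (ι v) h)
    have h4' : rank (negY6 N k j) (ι v) ≠ N + 3 := fun h =>
      hιb v (hinj _ (h.trans (h6 j).2.symm))
    omega
  -- counting lemmas
  have hcnt_b : ∀ t, t ≤ N + 2 → (fbApproversAt rank ℓ' t b).card = 0 := by
    intro t ht
    rw [show fbApproversAt rank ℓ' t b = Finset.univ.filter
      (fun w => rank w b ≤ t ∧ rank w b ≤ ℓ' w) from rfl]
    rw [Finset.card_eq_zero, Finset.filter_eq_empty_iff]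
    intro w _
    beta_reduce
    have := hrb w
    omega
  have hcnt_p_low : ∀ t, t ≤ N + 1 → (fbApproversAt rank ℓ' t p).card = 0 := by
    intro t ht
    rw [show fbApproversAt rank ℓ' t p = Finset.univ.filter
      (fun w => rank w p ≤ t ∧ rank w p ≤ ℓ' w) from rfl]
    rw [Finset.card_eq_zero, Finset.filter_eq_empty_iff]
    intro w _
    beta_reduce
    have := hrp w
    omega
  have hcnt_a : ∀ t, (fbApproversAt rank ℓ' t a).card ≤ 3 * N := by
    intro t
    rw [show fbApproversAt rank ℓ' t a = Finset.univ.filter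
      (fun w => rank w a ≤ t ∧ rank w a ≤ ℓ' w) from rfl, negvoter_card_filter]
    beta_reduce
    have p1 : (Finset.univ.filter (fun i : V =>
        rank (negX N k i) a ≤ t ∧ rank (negX N k i) a ≤ ℓ' (negX N k i))).card ≤ N - k := by
      have hsub : Finset.univ.filter (fun i : V =>
          rank (negX N k i) a ≤ t ∧ rank (negX N k i) a ≤ ℓ' (negX N k i)) ⊆ Sᶜ := by
        intro i hi
        rw [Finset.mem_filter] at hi
        rw [Finset.mem_compl]
        intro hiS
        have h1 := hi.2.2
        rw [hℓ'S i hiS] at h1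
        have := hr1 (negX N k i) a
        omega
      have := Finset.card_le_card hsub
      rwa [Finset.card_compl, hS, hN] at this
    have p2 : (Finset.univ.filter (fun i : V =>
        rank (negXbar N k i) a ≤ t ∧ rank (negXbar N k i) a ≤ ℓ' (negXbar N k i))).card ≤ N := by
      have := Finset.card_le_univ (Finset.univ.filter (fun i : V =>
        rank (negXbar N k i) a ≤ t ∧ rank (negXbar N k i) a ≤ ℓ' (negXbar N k i)))
      rwa [hN] at this
    have p3 : (Finset.univ.filter (fun j : Fin (2 * N + 1) =>
        rank (negY3 N k j) a ≤ t ∧ rank (negY3 N k j) a ≤ ℓ' (negY3 N k j))).card = 0 := by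
      rw [Finset.card_eq_zero, Finset.filter_eq_empty_iff]
      intro j _
      beta_reduce
      have := hra_y3 j
      have := hl'y3 j
      omega
    have p4 : (Finset.univ.filter (fun j : Fin (N + k) =>
        rank (negY4 N k j) a ≤ t ∧ rank (negY4 N k j) a ≤ ℓ' (negY4 N k j))).card ≤ N + k := by
      have := Finset.card_le_univ (Finset.univ.filter (fun j : Fin (N + k) =>
        rank (negY4 N k j) a ≤ t ∧ rank (negY4 N k j) a ≤ ℓ' (negY4 N k j)))
      simpa using this
    have p5 : (Finset.univ.filter (fun j : Fin 1 =>
        rank (negY5 N k j) a ≤ t ∧ rank (negY5 N k j) a ≤ ℓ' (negY5 N k j))).card = 0 := by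
      rw [Finset.card_eq_zero, Finset.filter_eq_empty_iff]
      intro j _
      beta_reduce
      have := hra_y5 j
      have := hl'y5 j
      omega
    have p6 : (Finset.univ.filter (fun j : Fin (N - k - 2) =>
        rank (negY6 N k j) a ≤ t ∧ rank (negY6 N k j) a ≤ ℓ' (negY6 N k j))).card = 0 := by
      rw [Finset.card_eq_zero, Finset.filter_eq_empty_iff]
      intro j _
      beta_reduce
      have := hra_y6 j
      have := hl'y6 j
      omega
    omega
  have hcnt_p : (fbApproversAt rank ℓ' (N + 2) p).card = 3 * N + 1 := by
    rw [show fbApproversAt rank ℓ' (N + 2) p = Finset.univ.filter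
      (fun w => rank w p ≤ N + 2 ∧ rank w p ≤ ℓ' w) from rfl, negvoter_card_filter]
    beta_reduce
    have p1 : (Finset.univ.filter (fun i : V =>
        rank (negX N k i) p ≤ N + 2 ∧ rank (negX N k i) p ≤ ℓ' (negX N k i))).card = N - k := by
      have heq : Finset.univ.filter (fun i : V =>
          rank (negX N k i) p ≤ N + 2 ∧ rank (negX N k i) p ≤ ℓ' (negX N k i)) = Sᶜ := by
        ext i
        simp only [Finset.mem_filter, Finset.mem_univ, true_and, Finset.mem_compl]
        constructor
        · rintro ⟨h1, h2⟩ hiS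
          rw [hℓ'S i hiS] at h2
          have := hr1 (negX N k i) p
          omega
        · intro hiS
          have h1 := (hx i).2.2.2.1
          rw [hl'xNS i hiS]
          omega
      rw [heq, Finset.card_compl, hS, hN]
    have p2 : (Finset.univ.filter (fun i : V =>
        rank (negXbar N k i) p ≤ N + 2 ∧ rank (negXbar N k i) p ≤ ℓ' (negXbar N k i))).card
        = N := by
      rw [Finset.filter_true_of_mem, Finset.card_univ, hN]
      intro i _
      beta_reduce
      have h1 := (hxbar i).2.2.2.1
      have h2 := hl'xbar i
      omega
    have p3 : (Finset.univ.filter (fun j : Fin (2 * N + 1) =>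
        rank (negY3 N k j) p ≤ N + 2 ∧ rank (negY3 N k j) p ≤ ℓ' (negY3 N k j))).card = 0 := by
      rw [Finset.card_eq_zero, Finset.filter_eq_empty_iff]
      intro j _
      beta_reduce
      have := hrp_y3 j
      have := hl'y3 j
      omega
    have p4 : (Finset.univ.filter (fun j : Fin (N + k) =>
        rank (negY4 N k j) p ≤ N + 2 ∧ rank (negY4 N k j) p ≤ ℓ' (negY4 N k j))).card
        = N + k := by
      rw [Finset.filter_true_of_mem, Finset.card_univ, Fintype.card_fin]
      intro j _
      beta_reduce
      have h1 := (h4 j).2.2.1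
      have h2 := hl'y4 j
      omega
    have p5 : (Finset.univ.filter (fun j : Fin 1 =>
        rank (negY5 N k j) p ≤ N + 2 ∧ rank (negY5 N k j) p ≤ ℓ' (negY5 N k j))).card = 1 := by
      rw [Finset.filter_true_of_mem, Finset.card_univ, Fintype.card_fin]
      intro j _
      beta_reduce
      have h1 := (h5 j).2.1
      have h2 := hl'y5 j
      omega
    have p6 : (Finset.univ.filter (fun j : Fin (N - k - 2) =>
        rank (negY6 N k j) p ≤ N + 2 ∧ rank (negY6 N k j) p ≤ ℓ' (negY6 N k j))).card = 0 := by
      rw [Finset.card_eq_zero, Finset.filter_eq_empty_iff]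
      intro j _
      beta_reduce
      have := hrp_y6 j
      have := hl'y6 j
      omega
    omega
  have hcnt_d : ∀ d ∈ D, ∀ t, (fbApproversAt rank ℓ' t d).card ≤ 1 := by
    intro d hd t
    refine le_trans (Finset.card_le_card ?_) (hdummy d hd)
    intro w hw
    rw [show fbApproversAt rank ℓ' t d = Finset.univ.filter
      (fun w => rank w d ≤ t ∧ rank w d ≤ ℓ' w) from rfl, Finset.mem_filter] at hw
    rw [Finset.mem_filter]
    exact ⟨hw.1, le_trans hw.2.2 (hl'lecnt w)⟩
  have hcnt_v_dom : ∀ v : V, (∃ s ∈ S, v ∈ closedNbhd G s) → ∀ t,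
      (fbApproversAt rank ℓ' t (ι v)).card ≤ 3 * N := by
    rintro v ⟨s, hsS, hvs⟩ t
    rw [show fbApproversAt rank ℓ' t (ι v) = Finset.univ.filter
      (fun w => rank w (ι v) ≤ t ∧ rank w (ι v) ≤ ℓ' w) from rfl, negvoter_card_filter]
    beta_reduce
    have hAB : (Finset.univ.filter (fun i : V => v ∈ closedNbhd G i)).card +
        (Finset.univ.filter (fun i : V => ¬ v ∈ closedNbhd G i)).card = N := by
      rw [Finset.card_filter_add_card_filter_not, Finset.card_univ, hN]
    have hsA : s ∈ Finset.univ.filter (fun i : V => v ∈ closedNbhd G i) :=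
      Finset.mem_filter.2 ⟨Finset.mem_univ s, hvs⟩
    have hA1 : 1 ≤ (Finset.univ.filter (fun i : V => v ∈ closedNbhd G i)).card :=
      Finset.card_pos.2 ⟨s, hsA⟩
    have p1 : (Finset.univ.filter (fun i : V =>
        rank (negX N k i) (ι v) ≤ t ∧ rank (negX N k i) (ι v) ≤ ℓ' (negX N k i))).card ≤
        (Finset.univ.filter (fun i : V => v ∈ closedNbhd G i)).card - 1 := by
      have hsub : Finset.univ.filter (fun i : V =>
          rank (negX N k i) (ι v) ≤ t ∧ rank (negX N k i) (ι v) ≤ ℓ' (negX N k i)) ⊆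
          (Finset.univ.filter (fun i : V => v ∈ closedNbhd G i)).erase s := by
        intro i hi
        rw [Finset.mem_filter] at hi
        have hvi : v ∈ closedNbhd G i := by
          by_contra hvi
          have := hrv_x_out i v hvi
          have := hl'le (negX N k i)
          omega
        refine Finset.mem_erase.2 ⟨?_, Finset.mem_filter.2 ⟨Finset.mem_univ i, hvi⟩⟩
        rintro rfl
        have h1 := hi.2.2
        rw [hℓ'S _ hsS] at h1
        have := hr1 (negX N k i) (ι v)
        omega
      have := Finset.card_le_card hsub
      rwa [Finset.card_erase_of_mem hsA] at this
    have p2 : (Finset.univ.filter (fun i : V =>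
        rank (negXbar N k i) (ι v) ≤ t ∧
          rank (negXbar N k i) (ι v) ≤ ℓ' (negXbar N k i))).card ≤
        (Finset.univ.filter (fun i : V => ¬ v ∈ closedNbhd G i)).card := by
      apply Finset.card_le_card
      intro i hi
      rw [Finset.mem_filter] at hi ⊢
      refine ⟨Finset.mem_univ i, ?_⟩
      intro hvi
      have := hrv_xbar_in i v hvi
      have := hl'le (negXbar N k i)
      omega
    have p3 : (Finset.univ.filter (fun j : Fin (2 * N + 1) =>
        rank (negY3 N k j) (ι v) ≤ t ∧
          rank (negY3 N k j) (ι v) ≤ ℓ' (negY3 N k j))).card ≤ 2 * N + 1 := by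
      have := Finset.card_le_univ (Finset.univ.filter (fun j : Fin (2 * N + 1) =>
        rank (negY3 N k j) (ι v) ≤ t ∧ rank (negY3 N k j) (ι v) ≤ ℓ' (negY3 N k j)))
      simpa using this
    have p4 : (Finset.univ.filter (fun j : Fin (N + k) =>
        rank (negY4 N k j) (ι v) ≤ t ∧
          rank (negY4 N k j) (ι v) ≤ ℓ' (negY4 N k j))).card = 0 := by
      rw [Finset.card_eq_zero, Finset.filter_eq_empty_iff]
      intro j _
      beta_reduce
      have := hrv_y4 j v
      have := hl'y4 j
      omega
    have p5 : (Finset.univ.filter (fun j : Fin 1 =>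
        rank (negY5 N k j) (ι v) ≤ t ∧
          rank (negY5 N k j) (ι v) ≤ ℓ' (negY5 N k j))).card = 0 := by
      rw [Finset.card_eq_zero, Finset.filter_eq_empty_iff]
      intro j _
      beta_reduce
      have := hrv_y5 j v
      have := hl'y5 j
      omega
    have p6 : (Finset.univ.filter (fun j : Fin (N - k - 2) =>
        rank (negY6 N k j) (ι v) ≤ t ∧
          rank (negY6 N k j) (ι v) ≤ ℓ' (negY6 N k j))).card = 0 := by
      rw [Finset.card_eq_zero, Finset.filter_eq_empty_iff]
      intro j _
      beta_reduce
      have := hrv_y6 j v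
      have := hl'y6 j
      omega
    omega
  have hcnt_v_undom : ∀ v : V, (∀ s ∈ S, v ∉ closedNbhd G s) →
      3 * N + 1 ≤ (fbApproversAt rank ℓ' (N + 1) (ι v)).card := by
    intro v hv
    rw [show fbApproversAt rank ℓ' (N + 1) (ι v) = Finset.univ.filter
      (fun w => rank w (ι v) ≤ N + 1 ∧ rank w (ι v) ≤ ℓ' w) from rfl, negvoter_card_filter]
    beta_reduce
    have hAB : (Finset.univ.filter (fun i : V => v ∈ closedNbhd G i)).card +
        (Finset.univ.filter (fun i : V => ¬ v ∈ closedNbhd G i)).card = N := by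
      rw [Finset.card_filter_add_card_filter_not, Finset.card_univ, hN]
    have p1 : (Finset.univ.filter (fun i : V => v ∈ closedNbhd G i)).card ≤
        (Finset.univ.filter (fun i : V =>
          rank (negX N k i) (ι v) ≤ N + 1 ∧
            rank (negX N k i) (ι v) ≤ ℓ' (negX N k i))).card := by
      apply Finset.card_le_card
      intro i hi
      rw [Finset.mem_filter] at hi ⊢
      have hiS : i ∉ S := fun hiS => hv i hiS hi.2
      have := hrv_x_in i v hi.2
      refine ⟨Finset.mem_univ i, this, ?_⟩
      rw [hl'xNS i hiS]
      omega
    have p2 : (Finset.univ.filter (fun i : V => ¬ v ∈ closedNbhd G i)).card ≤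
        (Finset.univ.filter (fun i : V =>
          rank (negXbar N k i) (ι v) ≤ N + 1 ∧
            rank (negXbar N k i) (ι v) ≤ ℓ' (negXbar N k i))).card := by
      apply Finset.card_le_card
      intro i hi
      rw [Finset.mem_filter] at hi ⊢
      have := hrv_xbar_out i v hi.2
      refine ⟨Finset.mem_univ i, this, ?_⟩
      rw [hl'xbar i]
      omega
    have p3 : (Finset.univ.filter (fun j : Fin (2 * N + 1) =>
        rank (negY3 N k j) (ι v) ≤ N + 1 ∧
          rank (negY3 N k j) (ι v) ≤ ℓ' (negY3 N k j))).card = 2 * N + 1 := by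
      rw [Finset.filter_true_of_mem, Finset.card_univ, Fintype.card_fin]
      intro j _
      beta_reduce
      have h1 := (h3 j).1 v
      have h2 := hl'y3 j
      omega
    omega
  -- majority reformulation
  have hmaj_iff : ∀ t (c : C), fbMajAt rank ℓ' t c ↔
      3 * N + 1 ≤ (fbApproversAt rank ℓ' t c).card := by
    intro t c
    unfold fbMajAt
    rw [hhalf]
  have hpmaj : fbMajAt rank ℓ' (N + 2) p := by
    rw [hmaj_iff, hcnt_p]
  have hnomaj_low : (∀ v : V, ∃ s ∈ S, v ∈ closedNbhd G s) →
      ∀ t, t ≤ N + 1 → ∀ c : C, ¬ fbMajAt rank ℓ' t c := by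
    intro hdom t ht c hc
    rw [hmaj_iff] at hc
    rcases hcover c with ⟨v, rfl⟩ | rfl | rfl | rfl | hD
    · have := hcnt_v_dom v (hdom v) t
      omega
    · have := hcnt_a t
      omega
    · have := hcnt_b t (by omega)
      omega
    · have := hcnt_p_low t ht
      omega
    · have := hcnt_d c hD t
      omega
  have hleast : (∀ v : V, ∃ s ∈ S, v ∈ closedNbhd G s) →
      IsLeast {t : ℕ | ∃ c' : C, fbMajAt rank ℓ' t c'} (N + 2) := by
    intro hdom
    refine ⟨⟨p, hpmaj⟩, ?_⟩
    rintro t ⟨c', hc'⟩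
    by_contra hlt
    push_neg at hlt
    exact hnomaj_low hdom t (by omega) c' hc'
  have hmax2 : (∀ v : V, ∃ s ∈ S, v ∈ closedNbhd G s) → ∀ c : C, c ≠ p →
      (fbApproversAt rank ℓ' (N + 2) c).card ≤ 3 * N := by
    intro hdom c hc
    rcases hcover c with ⟨v, rfl⟩ | rfl | rfl | rfl | hD
    · exact hcnt_v_dom v (hdom v) _
    · exact hcnt_a _
    · have := hcnt_b (N + 2) le_rfl
      omega
    · exact absurd rfl hc
    · have := hcnt_d c hD (N + 2)
      omega
  have huniqcnt : (∀ v : V, ∃ s ∈ S, v ∈ closedNbhd G s) → ∀ c : C,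
      3 * N + 1 ≤ (fbApproversAt rank ℓ' (N + 2) c).card → c = p := by
    intro hdom c hcard
    by_contra hc
    have := hmax2 hdom c hc
    omega
  have hpFW : (∀ v : V, ∃ s ∈ S, v ∈ closedNbhd G s) → IsFallbackWinner rank ℓ' p := by
    intro hdom
    left
    refine ⟨N + 2, hleast hdom, fun c' => ?_⟩
    by_cases hc : c' = p
    · subst hc
      exact le_refl _
    · have h1 := hmax2 hdom c' hc
      have h2 := hcnt_p
      omega
  have hpSW : (∀ v : V, ∃ s ∈ S, v ∈ closedNbhd G s) → IsSimpFallbackWinner rank ℓ' p :=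
    fun hdom => Or.inl ⟨N + 2, hleast hdom, hpmaj⟩
  have huniqFW : (∀ v : V, ∃ s ∈ S, v ∈ closedNbhd G s) →
      ∀ c : C, IsFallbackWinner rank ℓ' c → c = p := by
    intro hdom c hc
    rcases hc with ⟨kB, hkB, hm⟩ | ⟨hno, -⟩
    · have hkB2 : kB = N + 2 := hkB.unique (hleast hdom)
      subst hkB2
      have h1 := hm p
      rw [hcnt_p] at h1
      exact huniqcnt hdom c h1
    · exact absurd ⟨N + 2, p, hpmaj⟩ hno
  have huniqSW : (∀ v : V, ∃ s ∈ S, v ∈ closedNbhd G s) →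
      ∀ c : C, IsSimpFallbackWinner rank ℓ' c → c = p := by
    intro hdom c hc
    rcases hc with ⟨kB, hkB, hm⟩ | ⟨hno, -⟩
    · have hkB2 : kB = N + 2 := hkB.unique (hleast hdom)
      subst hkB2
      rw [hmaj_iff] at hm
      exact huniqcnt hdom c hm
    · exact absurd ⟨N + 2, p, hpmaj⟩ hno
  have hnd : ∀ v : V, (∀ s ∈ S, v ∉ closedNbhd G s) →
      (¬ IsFallbackWinner rank ℓ' p) ∧ (¬ IsSimpFallbackWinner rank ℓ' p) := by
    intro v hv
    have hmajv : fbMajAt rank ℓ' (N + 1) (ι v) := by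
      rw [hmaj_iff]
      exact hcnt_v_undom v hv
    constructor
    · rintro (⟨kB, hkB, hm⟩ | ⟨hno, -⟩)
      · have hkB1 : kB ≤ N + 1 := hkB.2 ⟨ι v, hmajv⟩
        obtain ⟨c', hc'⟩ := hkB.1
        rw [hmaj_iff] at hc'
        have h1 := hm c'
        have h2 := hcnt_p_low kB hkB1
        omega
      · exact hno ⟨N + 1, ι v, hmajv⟩
    · rintro (⟨kB, hkB, hm⟩ | ⟨hno, -⟩)
      · have hkB1 : kB ≤ N + 1 := hkB.2 ⟨ι v, hmajv⟩
        rw [hmaj_iff] at hm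
        have h2 := hcnt_p_low kB hkB1
        omega
      · exact hno ⟨N + 1, ι v, hmajv⟩
  by_cases hdom : ∀ v : V, ∃ s ∈ S, v ∈ closedNbhd G s
  · exact ⟨⟨fun _ => hdom, fun _ => hpFW hdom⟩, ⟨fun _ => hdom, fun _ => hpSW hdom⟩,
      fun _ => ⟨huniqFW hdom, huniqSW hdom⟩⟩
  · push_neg at hdom
    obtain ⟨v, hv⟩ := hdom
    have h := hnd v hv
    refine ⟨⟨fun hw => absurd hw h.1, fun hd => absurd (hd v) ?_⟩,
      ⟨fun hw => absurd hw h.2, fun hd => absurd (hd v) ?_⟩,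
      fun hd => absurd (hd v) ?_⟩ <;>
    · push_neg
      exact hv
end

section
/- Let E be an election with approval counts in which the designated candidate p reaches majority at some round. Let ℓ_0 be the least round at which p reaches majority in E, and let ℓ_1 < ℓ_2 < ⋯ < ℓ_q be the increasing enumeration of the set {rank(p,v^i) : v^i approves p in E and rank(p,v^i) > ℓ_0}. Let β ≥ 0 be an integer and let t be a push action with t_i ≤ 0 for all i and Σ_i |t_i| ≤ β such that p reaches majority at some round in psh(E,t). Then the least round at which p reaches majority in psh(E,t) equals ℓ_j for some j with 0 ≤ j ≤ min{β, q}. -/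
/-- Candidate `c` reaches majority at round `k`: at least `⌊n/2⌋+1` voters both approve
`c` and rank `c` in their top `k` positions. -/
def reachesMajAt {C : Type*} {n : ℕ} (rank : Fin n → C → ℕ) (ℓcnt : Fin n → ℕ)
    (k : ℕ) (c : C) : Prop :=
  n / 2 + 1 ≤ (Finset.univ.filter (fun i : Fin n => rank i c ≤ k ∧ rank i c ≤ ℓcnt i)).card

/-- The approval counts after applying a push action `t`. -/
def pushCount {n : ℕ} (m : ℕ) (ℓcnt : Fin n → ℕ) (t : Fin n → ℤ) : Fin n → ℕ :=
  fun i => min m ((ℓcnt i : ℤ) + t i).toNat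

/-- let `ℓ₀` be the least round at which `p` reaches majority in `E`, and let
`ℓ₁ < ⋯ < ℓ_q` enumerate the set of ranks `rank(p,v^i)` over voters approving `p` in `E`
with `rank(p,v^i) > ℓ₀`. If `t` is a push action with `t_i ≤ 0` for all `i` and
`Σ_i |t_i| ≤ β`, and `p` reaches majority at some round in `psh(E,t)`, then the least such
round equals `ℓ_j` for some `0 ≤ j ≤ min{β,q}`. -/
theorem statement11 {C : Type*} [Fintype C] [DecidableEq C] {n m : ℕ}
    (rank : Fin n → C → ℕ)
    (hcard : Fintype.card C = m)
    (hinj : ∀ i, Function.Injective (rank i))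
    (hrange : ∀ i c, 1 ≤ rank i c ∧ rank i c ≤ m)
    (ℓcnt : Fin n → ℕ) (hℓ : ∀ i, ℓcnt i ≤ m)
    (p : C)
    (ℓ0 : ℕ) (hℓ0 : IsLeast {j : ℕ | reachesMajAt rank ℓcnt j p} ℓ0)
    (β : ℕ) (t : Fin n → ℤ) (ht : ∀ i, t i ≤ 0) (htβ : ∑ i, (t i).natAbs ≤ β)
    (ℓ' : ℕ) (hℓ' : IsLeast {j : ℕ | reachesMajAt rank (pushCount m ℓcnt t) j p} ℓ') :
    ∃ j : ℕ, j ≤ β ∧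
      j ≤ ((Finset.univ.filter
              (fun i : Fin n => rank i p ≤ ℓcnt i ∧ ℓ0 < rank i p)).image
            (fun i => rank i p)).card ∧
      ℓ' = (ℓ0 :: ((Finset.univ.filter
              (fun i : Fin n => rank i p ≤ ℓcnt i ∧ ℓ0 < rank i p)).image
            (fun i => rank i p)).sort (· ≤ ·)).getD j 0 := by
  classical
  set pc : Fin n → ℕ := pushCount m ℓcnt t with hpc
  have hpcle : ∀ i, pc i ≤ ℓcnt i := by
    intro i
    have h1 : pc i = min m ((ℓcnt i : ℤ) + t i).toNat := rfl
    have h2 := ht i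
    have h3 := hℓ i
    omega
  set S : Finset ℕ := (Finset.univ.filter
      (fun i : Fin n => rank i p ≤ ℓcnt i ∧ ℓ0 < rank i p)).image (fun i => rank i p) with hS
  set L : List ℕ := S.sort (· ≤ ·) with hL
  -- pushed filter set is a subset of the original one
  have hBA : ∀ k : ℕ, (Finset.univ.filter (fun i : Fin n => rank i p ≤ k ∧ rank i p ≤ pc i))
      ⊆ Finset.univ.filter (fun i => rank i p ≤ k ∧ rank i p ≤ ℓcnt i) := by
    intro k i hi
    simp only [Finset.mem_filter, Finset.mem_univ, true_and] at hi ⊢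
    exact ⟨hi.1, le_trans hi.2 (hpcle i)⟩
  have hpush : ∀ k : ℕ, reachesMajAt rank pc k p → reachesMajAt rank ℓcnt k p := by
    intro k hk
    exact le_trans hk (Finset.card_le_card (hBA k))
  have h0le : ℓ0 ≤ ℓ' := hℓ0.2 (hpush ℓ' hℓ'.1)
  rcases eq_or_lt_of_le h0le with heq | hlt
  · exact ⟨0, Nat.zero_le _, Nat.zero_le _, heq.symm⟩
  -- ℓ' > ℓ0, so ℓ' ∈ S
  have hnot : ¬ reachesMajAt rank pc (ℓ' - 1) p := by
    intro h
    have := hℓ'.2 h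
    omega
  have hsub : (Finset.univ.filter (fun i : Fin n => rank i p ≤ ℓ' - 1 ∧ rank i p ≤ pc i))
      ⊆ Finset.univ.filter (fun i => rank i p ≤ ℓ' ∧ rank i p ≤ pc i) := by
    intro i hi
    simp only [Finset.mem_filter, Finset.mem_univ, true_and] at hi ⊢
    exact ⟨by omega, hi.2⟩
  have hcardlt : (Finset.univ.filter (fun i : Fin n => rank i p ≤ ℓ' - 1 ∧ rank i p ≤ pc i)).card
      < (Finset.univ.filter (fun i : Fin n => rank i p ≤ ℓ' ∧ rank i p ≤ pc i)).card := by
    have h1 : n / 2 + 1 ≤ (Finset.univ.filter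
        (fun i : Fin n => rank i p ≤ ℓ' ∧ rank i p ≤ pc i)).card := hℓ'.1
    have h2 : ¬ (n / 2 + 1 ≤ (Finset.univ.filter
        (fun i : Fin n => rank i p ≤ ℓ' - 1 ∧ rank i p ≤ pc i)).card) := hnot
    omega
  obtain ⟨i0, hi0B, hi0nB⟩ := Finset.exists_of_ssubset
    (hsub.ssubset_of_ne (by intro h; rw [h] at hcardlt; omega))
  have hi0rank : rank i0 p = ℓ' ∧ rank i0 p ≤ pc i0 := by
    simp only [Finset.mem_filter, Finset.mem_univ, true_and] at hi0B hi0nB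
    push_neg at hi0nB
    constructor
    · by_contra hcon
      have := hi0nB (by omega)
      omega
    · exact hi0B.2
  have hmemS : ℓ' ∈ S := by
    rw [hS, Finset.mem_image]
    exact ⟨i0, by
      simp only [Finset.mem_filter, Finset.mem_univ, true_and]
      exact ⟨le_trans hi0rank.2 (hpcle i0), by omega⟩, hi0rank.1⟩
  have hmemL : ℓ' ∈ L := (Finset.mem_sort _).mpr hmemS
  set j0 : ℕ := L.idxOf ℓ' with hj0def
  have hj0 : j0 < L.length := List.idxOf_lt_length_iff.mpr hmemL
  have hget : L.get ⟨j0, hj0⟩ = ℓ' := List.idxOf_get hj0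
  have hLlen : L.length = S.card := Finset.length_sort _
  refine ⟨j0 + 1, ?_, by omega, ?_⟩
  · -- the budget bound
    by_contra hcon
    push_neg at hcon
    have hβj0 : β ≤ j0 := by omega
    rcases Nat.eq_zero_or_pos β with hβ0 | hβpos
    · -- β = 0 : no push at all, so ℓ' = ℓ0, contradiction
      have hall : ∀ i, (t i).natAbs = 0 := by
        intro i
        have : ∑ i, (t i).natAbs = 0 := by omega
        exact Finset.sum_eq_zero_iff.mp this i (Finset.mem_univ i)
      have hpceq : ∀ i, pc i = ℓcnt i := by
        intro i
        have h1 : pc i = min m ((ℓcnt i : ℤ) + t i).toNat := rfl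
        have h2 := hall i
        have h3 := hℓ i
        omega
      have hmj : reachesMajAt rank pc ℓ0 p := by
        have h1 : n / 2 + 1 ≤ (Finset.univ.filter
            (fun i : Fin n => rank i p ≤ ℓ0 ∧ rank i p ≤ ℓcnt i)).card := hℓ0.1
        have heqset : (Finset.univ.filter (fun i : Fin n => rank i p ≤ ℓ0 ∧ rank i p ≤ pc i))
            = Finset.univ.filter (fun i : Fin n => rank i p ≤ ℓ0 ∧ rank i p ≤ ℓcnt i) := by
          apply Finset.filter_congr
          intro i _
          rw [hpceq i]
        show n / 2 + 1 ≤ _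
        rw [heqset]
        exact h1
      have := hℓ'.2 hmj
      omega
    · -- β ≥ 1 : round r := L[β-1]
      have hβ1 : β - 1 < L.length := by omega
      set r : ℕ := L.get ⟨β - 1, hβ1⟩ with hrdef
      have hrS : r ∈ S := (Finset.mem_sort _).mp (L.get_mem _)
      have hrlt : r < ℓ' := by
        rw [← hget]
        exact (Finset.sortedLT_sort S).strictMono_get (by simp [Fin.lt_def]; omega)
      have hA0 : n / 2 + 1 ≤ (Finset.univ.filter
          (fun i : Fin n => rank i p ≤ ℓ0 ∧ rank i p ≤ ℓcnt i)).card := hℓ0.1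
      -- the first β elements of L are distinct values in S that are ≤ r
      have htake : ((L.take β).toFinset : Finset ℕ) ⊆ S.filter (· ≤ r) := by
        intro x hx
        rw [List.mem_toFinset] at hx
        obtain ⟨k, hk, hxk⟩ := List.mem_iff_getElem.mp hx
        have hlt2 : k < L.length ∧ k < β := by
          have := List.length_take (i := β) (l := L)
          omega
        rw [Finset.mem_filter]
        constructor
        · rw [← hxk, List.getElem_take]
          exact (Finset.mem_sort _).mp (List.get_mem L ⟨k, hlt2.1⟩)
        · rw [← hxk, List.getElem_take]
          show L.get ⟨k, hlt2.1⟩ ≤ r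
          exact (Finset.sortedLT_sort S).strictMono_get.monotone (by simp [Fin.le_def]; omega)
      have htakecard : ((L.take β).toFinset : Finset ℕ).card = β := by
        rw [List.toFinset_card_of_nodup ((L.take_sublist β).nodup (Finset.sort_nodup _ _))]
        rw [List.length_take]
        omega
      have hfiltcard : β ≤ (S.filter (· ≤ r)).card := by
        rw [← htakecard]
        exact Finset.card_le_card htake
      -- T : voters approving p at ranks in (ℓ0, r]
      set T : Finset (Fin n) := Finset.univ.filter
          (fun i : Fin n => rank i p ≤ ℓcnt i ∧ ℓ0 < rank i p ∧ rank i p ≤ r) with hT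
      have hTcard : β ≤ T.card := by
        refine le_trans hfiltcard (Finset.card_le_card_of_surjOn (fun i => rank i p) ?_)
        intro x hx
        simp only [Finset.coe_filter, Set.mem_setOf_eq, Finset.mem_coe] at hx
        obtain ⟨hxS, hxr⟩ := hx
        rw [hS, Finset.mem_image] at hxS
        obtain ⟨i, hi, hix⟩ := hxS
        simp only [Finset.mem_filter, Finset.mem_univ, true_and] at hi
        refine ⟨i, ?_, hix⟩
        simp only [hT, Finset.coe_filter, Set.mem_setOf_eq, Finset.mem_univ, true_and]
        exact ⟨hi.1, hi.2, by omega⟩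
      -- r ∈ S gives ℓ0 < r
      have hℓ0r : ℓ0 < r := by
        rw [hS, Finset.mem_image] at hrS
        obtain ⟨i, hi, hir⟩ := hrS
        simp only [Finset.mem_filter, Finset.mem_univ, true_and] at hi
        omega
      -- original election at round r has at least n/2+1+β approving voters
      set Ar : Finset (Fin n) := Finset.univ.filter
          (fun i : Fin n => rank i p ≤ r ∧ rank i p ≤ ℓcnt i) with hAr
      have hunion : (Finset.univ.filter
          (fun i : Fin n => rank i p ≤ ℓ0 ∧ rank i p ≤ ℓcnt i)) ∪ T ⊆ Ar := by
        intro i hi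
        rw [Finset.mem_union] at hi
        simp only [hT, hAr, Finset.mem_filter, Finset.mem_univ, true_and] at hi ⊢
        rcases hi with hi | hi
        · exact ⟨by omega, hi.2⟩
        · exact ⟨hi.2.2, hi.1⟩
      have hdisj : Disjoint (Finset.univ.filter
          (fun i : Fin n => rank i p ≤ ℓ0 ∧ rank i p ≤ ℓcnt i)) T := by
        rw [Finset.disjoint_left]
        intro i hi hiT
        simp only [hT, Finset.mem_filter, Finset.mem_univ, true_and] at hi hiT
        omega
      have hArcard : n / 2 + 1 + β ≤ Ar.card := by
        have h1 := Finset.card_le_card hunion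
        rw [Finset.card_union_of_disjoint hdisj] at h1
        omega
      -- pushed election loses at most β voters
      set Br : Finset (Fin n) := Finset.univ.filter
          (fun i : Fin n => rank i p ≤ r ∧ rank i p ≤ pc i) with hBr
      have hBrAr : Br ⊆ Ar := hBA r
      have hDcard : (Ar \ Br).card ≤ β := by
      -- each removed voter has |t i| ≥ 1
        have hone : ∀ i ∈ Ar \ Br, 1 ≤ (t i).natAbs := by
          intro i hi
          rw [Finset.mem_sdiff] at hi
          simp only [hAr, hBr, Finset.mem_filter, Finset.mem_univ, true_and] at hi
          have h1 : pc i = min m ((ℓcnt i : ℤ) + t i).toNat := rfl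
          have h3 := hℓ i
          have h4 := hi.1
          have h5 := hi.2
          omega
        calc (Ar \ Br).card = ∑ i ∈ Ar \ Br, 1 := by simp
          _ ≤ ∑ i ∈ Ar \ Br, (t i).natAbs := Finset.sum_le_sum hone
          _ ≤ ∑ i, (t i).natAbs :=
              Finset.sum_le_sum_of_subset (Finset.subset_univ _)
          _ ≤ β := htβ
      have hBrcard : n / 2 + 1 ≤ Br.card := by
        have := Finset.card_sdiff_add_card_eq_card hBrAr
        omega
      have hmr : reachesMajAt rank pc r p := hBrcard
      have := hℓ'.2 hmr
      omega
  · -- ℓ' = getD (j0+1)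
    rw [List.getD_cons_succ, List.getD_eq_get L 0 ⟨j0, hj0⟩, hget]
end

section
/- Let E be an election with approval counts, p a designated candidate, and let R be any of the rules SP-AV, Fallback voting, or simplified Fallback voting. Call a push action t with t_i ≥ 0 for all i successful if p is a winner of psh(E,t) under R, and minimal successful if it is successful and no push action s ≠ t with 0 ≤ s_i ≤ t_i for all i is successful. Then for every minimal successful push action t and every voter v^i with t_i > 0: ℓ^i < rank(p,v^i) and ℓ^i + t_i = rank(p,v^i); that is, a minimal successful increase-only bribery raises each modified voter's approval count exactly to the rank of p in that vote. -/
section Rules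

variable {C W : Type*} [Fintype W]

/-- `c` is an SP-AV winner: `c` has maximum approval score. -/
def IsSPAVWinner (rank : W → C → ℕ) (ℓcnt : W → ℕ) (c : C) : Prop :=
  ∀ c' : C, fbApprovalScore rank ℓcnt c' ≤ fbApprovalScore rank ℓcnt c

end Rules

section Aux

variable {C W : Type*} [Fintype W]

lemma approvers_subset_aux (rank : W → C → ℕ) {ℓ' ℓ : W → ℕ} (h : ∀ w, ℓ' w ≤ ℓ w)
    (k : ℕ) (c : C) : fbApproversAt rank ℓ' k c ⊆ fbApproversAt rank ℓ k c := by
  intro w hw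
  simp only [fbApproversAt, Finset.mem_filter, Finset.mem_univ, true_and] at *
  exact ⟨hw.1, hw.2.trans (h w)⟩

lemma approvers_eq_aux (rank : W → C → ℕ) {ℓ' ℓ : W → ℕ} {p : C}
    (hp : ∀ w, rank w p ≤ ℓ' w ↔ rank w p ≤ ℓ w) (k : ℕ) :
    fbApproversAt rank ℓ' k p = fbApproversAt rank ℓ k p := by
  unfold fbApproversAt
  apply Finset.filter_congr
  intro w _
  simp [hp w]

lemma score_le_aux (rank : W → C → ℕ) {ℓ' ℓ : W → ℕ} (h : ∀ w, ℓ' w ≤ ℓ w) (c : C) :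
    fbApprovalScore rank ℓ' c ≤ fbApprovalScore rank ℓ c := by
  apply Finset.card_le_card
  intro w hw
  simp only [fbApprovalScore, Finset.mem_filter, Finset.mem_univ, true_and] at *
  exact hw.trans (h w)

lemma score_eq_aux (rank : W → C → ℕ) {ℓ' ℓ : W → ℕ} {p : C}
    (hp : ∀ w, rank w p ≤ ℓ' w ↔ rank w p ≤ ℓ w) :
    fbApprovalScore rank ℓ' p = fbApprovalScore rank ℓ p := by
  unfold fbApprovalScore
  congr 1
  apply Finset.filter_congr
  intro w _
  simp [hp w]

lemma maj_mono_aux (rank : W → C → ℕ) {ℓ' ℓ : W → ℕ} (h : ∀ w, ℓ' w ≤ ℓ w)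
    {k : ℕ} {c : C} (hm : fbMajAt rank ℓ' k c) : fbMajAt rank ℓ k c :=
  hm.trans (Finset.card_le_card (approvers_subset_aux rank h k c))

lemma spav_preserve (rank : W → C → ℕ) {ℓ' ℓ : W → ℕ} (h : ∀ w, ℓ' w ≤ ℓ w) {p : C}
    (hp : ∀ w, rank w p ≤ ℓ' w ↔ rank w p ≤ ℓ w)
    (hw : IsSPAVWinner rank ℓ p) : IsSPAVWinner rank ℓ' p := by
  intro c'
  calc fbApprovalScore rank ℓ' c' ≤ fbApprovalScore rank ℓ c' := score_le_aux rank h c'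
    _ ≤ fbApprovalScore rank ℓ p := hw c'
    _ = fbApprovalScore rank ℓ' p := (score_eq_aux rank hp).symm

lemma p_maj_aux (rank : W → C → ℕ) {ℓ : W → ℕ} {p : C} {kB : ℕ}
    (hmem : ∃ c' : C, fbMajAt rank ℓ kB c')
    (hmax : ∀ c' : C, (fbApproversAt rank ℓ kB c').card ≤ (fbApproversAt rank ℓ kB p).card) :
    fbMajAt rank ℓ kB p := by
  obtain ⟨c', hc'⟩ := hmem
  exact hc'.trans (hmax c')

lemma fb_preserve (rank : W → C → ℕ) {ℓ' ℓ : W → ℕ} (h : ∀ w, ℓ' w ≤ ℓ w) {p : C}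
    (hp : ∀ w, rank w p ≤ ℓ' w ↔ rank w p ≤ ℓ w)
    (hw : IsFallbackWinner rank ℓ p) : IsFallbackWinner rank ℓ' p := by
  rcases hw with ⟨kB, hkB, hmax⟩ | ⟨hno, hmax⟩
  · left
    refine ⟨kB, ⟨⟨p, ?_⟩, ?_⟩, ?_⟩
    · show fbMajAt rank ℓ' kB p
      unfold fbMajAt
      rw [approvers_eq_aux rank hp]
      exact p_maj_aux rank hkB.1 hmax
    · rintro k ⟨c'', hc''⟩
      exact hkB.2 ⟨c'', maj_mono_aux rank h hc''⟩
    · intro c''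
      calc (fbApproversAt rank ℓ' kB c'').card
          ≤ (fbApproversAt rank ℓ kB c'').card :=
            Finset.card_le_card (approvers_subset_aux rank h kB c'')
        _ ≤ (fbApproversAt rank ℓ kB p).card := hmax c''
        _ = (fbApproversAt rank ℓ' kB p).card := by rw [approvers_eq_aux rank hp]
  · right
    refine ⟨fun ⟨k, c', hc'⟩ => hno ⟨k, c', maj_mono_aux rank h hc'⟩, fun c' => ?_⟩
    calc fbApprovalScore rank ℓ' c' ≤ fbApprovalScore rank ℓ c' := score_le_aux rank h c'
      _ ≤ fbApprovalScore rank ℓ p := hmax c'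
      _ = fbApprovalScore rank ℓ' p := (score_eq_aux rank hp).symm

lemma sfb_preserve (rank : W → C → ℕ) {ℓ' ℓ : W → ℕ} (h : ∀ w, ℓ' w ≤ ℓ w) {p : C}
    (hp : ∀ w, rank w p ≤ ℓ' w ↔ rank w p ≤ ℓ w)
    (hw : IsSimpFallbackWinner rank ℓ p) : IsSimpFallbackWinner rank ℓ' p := by
  rcases hw with ⟨kB, hkB, hmaj⟩ | ⟨hno, hmax⟩
  · left
    have hmaj' : fbMajAt rank ℓ' kB p := by
      unfold fbMajAt
      rw [approvers_eq_aux rank hp]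
      exact hmaj
    refine ⟨kB, ⟨⟨p, hmaj'⟩, ?_⟩, hmaj'⟩
    rintro k ⟨c'', hc''⟩
    exact hkB.2 ⟨c'', maj_mono_aux rank h hc''⟩
  · right
    refine ⟨fun ⟨k, c', hc'⟩ => hno ⟨k, c', maj_mono_aux rank h hc'⟩, fun c' => ?_⟩
    calc fbApprovalScore rank ℓ' c' ≤ fbApprovalScore rank ℓ c' := score_le_aux rank h c'
      _ ≤ fbApprovalScore rank ℓ p := hmax c'
      _ = fbApprovalScore rank ℓ' p := (score_eq_aux rank hp).symm

end Aux

/-- for any of SP-AV, Fallback, and simplified Fallback, a minimal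
successful increase-only push action raises the approval count of every modified voter
exactly to the rank of `p` in that vote. -/
theorem statement12 {C : Type*} [Fintype C] [DecidableEq C] {n m : ℕ}
    (rank : Fin n → C → ℕ)
    (hcard : Fintype.card C = m)
    (hinj : ∀ i, Function.Injective (rank i))
    (hrange : ∀ i c, 1 ≤ rank i c ∧ rank i c ≤ m)
    (ℓcnt : Fin n → ℕ) (hℓ : ∀ i, ℓcnt i ≤ m)
    (p : C)
    (Rwin : (Fin n → C → ℕ) → (Fin n → ℕ) → C → Prop)
    (hR : Rwin = IsSPAVWinner ∨ Rwin = IsFallbackWinner ∨ Rwin = IsSimpFallbackWinner)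
    (t : Fin n → ℕ)
    (hsucc : Rwin rank (fun i => min m (ℓcnt i + t i)) p)
    (hmin : ∀ s : Fin n → ℕ, s ≠ t → (∀ i, s i ≤ t i) →
      ¬ Rwin rank (fun i => min m (ℓcnt i + s i)) p) :
    ∀ i : Fin n, 0 < t i → ℓcnt i < rank i p ∧ ℓcnt i + t i = rank i p := by
  intro i hti
  set s : Fin n → ℕ := Function.update t i (t i - 1) with hs
  have hsne : s ≠ t := by
    intro h
    have := congrFun h i
    simp only [hs, Function.update_self] at this
    omega
  have hsle : ∀ j, s j ≤ t j := by
    intro j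
    by_cases hj : j = i
    · subst hj; simp [hs]
    · simp [hs, Function.update_of_ne hj]
  have hfail := hmin s hsne hsle
  -- Case 1: ℓcnt i + t i > m: the truncated counts are identical, contradiction.
  have hLm : ℓcnt i + t i ≤ m := by
    by_contra hgt
    apply hfail
    have : (fun j => min m (ℓcnt j + s j)) = (fun j => min m (ℓcnt j + t j)) := by
      funext j
      by_cases hj : j = i
      · subst hj; simp only [hs, Function.update_self]; omega
      · simp [hs, Function.update_of_ne hj]
    rw [this]; exact hsucc
  -- Case 2: rank i p ≠ ℓcnt i + t i: decreasing t i by 1 keeps p winning.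
  have hrk : rank i p = ℓcnt i + t i := by
    by_contra hne
    apply hfail
    set ℓ : Fin n → ℕ := fun j => min m (ℓcnt j + t j) with hℓdef
    set ℓ' : Fin n → ℕ := fun j => min m (ℓcnt j + s j) with hℓ'def
    have hle : ∀ w, ℓ' w ≤ ℓ w := by
      intro w
      simp only [hℓdef, hℓ'def]
      exact min_le_min le_rfl (by have := hsle w; omega)
    have hpind : ∀ w, rank w p ≤ ℓ' w ↔ rank w p ≤ ℓ w := by
      intro w
      by_cases hj : w = i
      · rw [hj]
        simp only [hℓdef, hℓ'def, hs, Function.update_self]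
        omega
      · simp [hℓdef, hℓ'def, hs, Function.update_of_ne hj]
    rcases hR with h | h | h <;> subst h
    · exact spav_preserve rank hle hpind hsucc
    · exact fb_preserve rank hle hpind hsucc
    · exact sfb_preserve rank hle hpind hsucc
  exact ⟨by omega, hrk.symm⟩
end
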